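/- arXiv:0906.4946 — 6 statements merged into one kernel-verified Lean document; each statement's English description precedes it below -/
import Mathlib

section
/- For any real numbers a_1, ..., a_n, the sum over all n! permutations σ of {1,...,n} of max(0, a_{σ1}, a_{σ1}+a_{σ2}, ..., a_{σ1}+...+a_{σn}) equals the sum over all permutations σ of a_{σ1} multiplied by the number of indices k in {1,...,n} with a_{σ1}+...+a_{σk} ≥ 0. -/
open Finset Equiv

namespace DysonAux

/-- Cycle on the first `m` coordinates of `Fin n`. -/
def cyc (n m : ℕ) (hm : 0 < m) (hmn : m ≤ n) : Equiv.Perm (Fin n) where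
  toFun j := if _ : (j : ℕ) < m then ⟨((j : ℕ) + 1) % m, (Nat.mod_lt _ hm).trans_le hmn⟩ else j
  invFun j := if _ : (j : ℕ) < m then ⟨((j : ℕ) + (m - 1)) % m, (Nat.mod_lt _ hm).trans_le hmn⟩ else j
  left_inv j := by
    by_cases h : (j : ℕ) < m
    · have h1 : ((j : ℕ) + 1) % m < m := Nat.mod_lt _ hm
      simp only [dif_pos h, dif_pos h1]
      apply Fin.ext
      show (((j : ℕ) + 1) % m + (m - 1)) % m = j
      rw [Nat.mod_add_mod]
      have : (j : ℕ) + 1 + (m - 1) = (j : ℕ) + m := by omega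
      rw [this, Nat.add_mod_right, Nat.mod_eq_of_lt h]
    · simp only [dif_neg h]
  right_inv j := by
    by_cases h : (j : ℕ) < m
    · have h1 : ((j : ℕ) + (m - 1)) % m < m := Nat.mod_lt _ hm
      simp only [dif_pos h, dif_pos h1]
      apply Fin.ext
      show (((j : ℕ) + (m - 1)) % m + 1) % m = j
      rw [Nat.mod_add_mod]
      have : (j : ℕ) + (m - 1) + 1 = (j : ℕ) + m := by omega
      rw [this, Nat.add_mod_right, Nat.mod_eq_of_lt h]
    · simp only [dif_neg h]

lemma cyc_fix {n m : ℕ} (hm : 0 < m) (hmn : m ≤ n) {j : Fin n} (h : ¬ (j : ℕ) < m) :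
    cyc n m hm hmn j = j := by
  show (if _ : (j : ℕ) < m then _ else j) = j
  rw [dif_neg h]

lemma cyc_pow_fix {n m : ℕ} (hm : 0 < m) (hmn : m ≤ n) (i : ℕ) {j : Fin n}
    (h : ¬ (j : ℕ) < m) : ((cyc n m hm hmn) ^ i) j = j := by
  induction i with
  | zero => rfl
  | succ i ih =>
    rw [pow_succ, Equiv.Perm.mul_apply, cyc_fix hm hmn h, ih]

lemma cyc_pow_apply {n m : ℕ} (hm : 0 < m) (hmn : m ≤ n) (i j : ℕ) (hj : j < m) :
    ((cyc n m hm hmn) ^ i) ⟨j, hj.trans_le hmn⟩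
      = ⟨(j + i) % m, (Nat.mod_lt _ hm).trans_le hmn⟩ := by
  induction i with
  | zero => simp [Nat.mod_eq_of_lt hj]
  | succ i ih =>
    rw [pow_succ', Equiv.Perm.mul_apply, ih]
    have h1 : (j + i) % m < m := Nat.mod_lt _ hm
    show (if _ : ((j + i) % m) < m then _ else _) = _
    rw [dif_pos h1]
    apply Fin.ext
    show ((j + i) % m + 1) % m = (j + (i + 1)) % m
    rw [Nat.mod_add_mod, ← Nat.add_assoc]

lemma sup'_sub_const {s : Finset ℕ} (hs : s.Nonempty) (f : ℕ → ℝ) (c : ℝ) :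
    s.sup' hs (fun x => f x - c) = s.sup' hs f - c := by
  apply le_antisymm
  · exact Finset.sup'_le _ _ fun b hb => sub_le_sub_right (Finset.le_sup' f hb) c
  · rw [sub_le_iff_le_add]
    apply Finset.sup'_le _ _ fun b hb => ?_
    have := Finset.le_sup' (fun x => f x - c) hb
    linarith

lemma sup'_add_const {s : Finset ℕ} (hs : s.Nonempty) (f : ℕ → ℝ) (c : ℝ) :
    s.sup' hs (fun x => f x + c) = s.sup' hs f + c := by
  have := sup'_sub_const hs (fun x => f x + c) c
  simp only [add_sub_cancel_right] at this
  linarith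

/-- The core telescoping lemma. -/
lemma core (m : ℕ) (hm : 0 < m) (S : ℕ → ℝ) (hper : ∀ t, S (t + m) = S t + S m) :
    ∑ i ∈ range m,
        ((range (m + 1)).sup' nonempty_range_add_one (fun k => S (i + k))
          - (range m).sup' (nonempty_range_iff.2 hm.ne') (fun k => S (i + k)))
      = max (S m) 0 := by
  set hne : (range m).Nonempty := nonempty_range_iff.2 hm.ne'
  set C : ℕ → ℝ := fun i => (range m).sup' hne (fun k => S (i + k)) with hC
  have hSC : ∀ i, S i ≤ C i := fun i => by
    have h0 := Finset.le_sup' (fun k => S (i + k)) (mem_range.2 hm)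
    simp only [Nat.add_zero] at h0
    exact h0
  have hA : ∀ i, (range (m + 1)).sup' nonempty_range_add_one (fun k => S (i + k))
      = max (C i) (S (i + m)) := by
    intro i
    apply le_antisymm
    · apply Finset.sup'_le
      intro k hk
      rcases Nat.lt_succ_iff_lt_or_eq.1 (mem_range.1 hk) with h | h
      · exact le_max_of_le_left (Finset.le_sup' (fun k => S (i + k)) (mem_range.2 h))
      · subst h; exact le_max_right _ _
    · apply max_le
      · exact Finset.sup'_le _ _ fun k hk =>
          Finset.le_sup' (fun k => S (i + k)) (mem_range.2 ((mem_range.1 hk).trans m.lt_succ_self))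
      · exact Finset.le_sup' (fun k => S (i + k)) (mem_range.2 m.lt_succ_self)
  have hA' : ∀ i, (range (m + 1)).sup' nonempty_range_add_one (fun k => S (i + k))
      = max (S i) (C (i + 1)) := by
    intro i
    apply le_antisymm
    · apply Finset.sup'_le
      intro k hk
      match k with
      | 0 => exact le_max_left _ _ |>.trans_eq' (by rw [Nat.add_zero])
      | (j+1) =>
        refine le_max_of_le_right ?_
        have hj : j < m := by have := mem_range.1 hk; omega
        have := Finset.le_sup' (fun k => S (i + 1 + k)) (mem_range.2 hj)
        have he : i + 1 + j = i + (j + 1) := by omega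
        rw [he] at this
        exact this
    · apply max_le
      · exact Finset.le_sup' (f := fun k => S (i + k)) (mem_range.2 (Nat.succ_pos m))
      · apply Finset.sup'_le
        intro j hj
        have hj' : j + 1 < m + 1 := by have := mem_range.1 hj; omega
        have := Finset.le_sup' (fun k => S (i + k)) (mem_range.2 hj')
        have he : i + 1 + j = i + (j + 1) := by omega
        rw [← he] at this
        exact this
  by_cases hS : S m ≤ 0
  · have : ∀ i ∈ range m,
        (range (m + 1)).sup' nonempty_range_add_one (fun k => S (i + k)) - C i = 0 := by
      intro i _
      rw [hA i, sub_eq_zero]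
      have : S (i + m) ≤ C i := (by rw [hper i]; linarith [hSC i] : S (i + m) ≤ S i).trans (hSC i)
      exact max_eq_left this
    rw [Finset.sum_congr rfl this]
    simp [max_eq_right hS]
  · push_neg at hS
    have hstep : ∀ i ∈ range m,
        (range (m + 1)).sup' nonempty_range_add_one (fun k => S (i + k)) - C i
          = C (i + 1) - C i := by
      intro i _
      rw [hA' i]
      congr 1
      apply max_eq_right
      have h1 : S (i + m) ≤ C (i + 1) := by
        have hm1 : m - 1 < m := by omega
        have := Finset.le_sup' (fun k => S (i + 1 + k)) (mem_range.2 hm1)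
        have he : i + 1 + (m - 1) = i + m := by omega
        rw [he] at this
        exact this
      rw [hper i] at h1
      linarith
    rw [Finset.sum_congr rfl hstep, Finset.sum_range_sub (fun i => C i)]
    have hCm : C m = C 0 + S m := by
      rw [hC]
      simp only
      have : ∀ k ∈ range m, S (m + k) = S (0 + k) + S m := by
        intro k _
        rw [Nat.zero_add, Nat.add_comm m k, hper k]
      rw [Finset.sup'_congr hne rfl this, sup'_add_const]
    rw [hCm, max_eq_left hS.le]
    ring

section
variable {n : ℕ} (a : Fin n → ℝ)

/-- partial sum of first `k` values of `a ∘ σ`. -/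
def P (k : ℕ) (σ : Equiv.Perm (Fin n)) : ℝ :=
  ∑ j ∈ Finset.univ.filter (fun j : Fin n => (j : ℕ) < k), a (σ j)

lemma P_eq_range (k : ℕ) (hk : k ≤ n) (σ : Equiv.Perm (Fin n)) :
    P a k σ = ∑ x ∈ range k, (if h : x < n then a (σ ⟨x, h⟩) else 0) := by
  classical
  refine Finset.sum_bij' (i := fun (j : Fin n) _ => (j : ℕ))
    (j := fun (x : ℕ) hx => (⟨x, lt_of_lt_of_le (mem_range.1 hx) hk⟩ : Fin n))
    (fun j hj => mem_range.2 (by simpa using (Finset.mem_filter.1 hj).2))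
    (fun x hx => Finset.mem_filter.2 ⟨Finset.mem_univ _, mem_range.1 hx⟩)
    (fun j hj => by simp) (fun x hx => by simp) ?_
  intro j hj
  rw [dif_pos j.isLt]

lemma P_zero (σ : Equiv.Perm (Fin n)) : P a 0 σ = 0 := by
  unfold P
  rw [Finset.filter_false_of_mem (fun j _ => by omega), Finset.sum_empty]

lemma P_invariant (m : ℕ) (hm : 0 < m) (hmn : m ≤ n) (σ : Equiv.Perm (Fin n))
    (i k : ℕ) (hk : m ≤ k) :
    P a k (σ * (cyc n m hm hmn) ^ i) = P a k σ := by
  unfold P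
  have : ∀ j ∈ Finset.univ.filter (fun j : Fin n => (j : ℕ) < k),
      a ((σ * (cyc n m hm hmn) ^ i) j) = (a ∘ σ) (((cyc n m hm hmn) ^ i) j) := by
    intro j _; rfl
  rw [Finset.sum_congr rfl this]
  rw [Equiv.Perm.sum_comp ((cyc n m hm hmn) ^ i) _ (a ∘ σ) ?hs]
  · rfl
  · intro x hx
    simp only [Set.mem_setOf_eq] at hx
    by_contra hxk
    simp only [Finset.coe_filter, Set.mem_setOf_eq, Finset.mem_univ, true_and] at hxk
    exact hx (cyc_pow_fix hm hmn i (fun hlt => hxk (lt_of_lt_of_le hlt hk)))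

/-- periodic sequence associated to `a ∘ σ` with period `m`. -/
def bb (σ : Equiv.Perm (Fin n)) (m : ℕ) (t : ℕ) : ℝ :=
  if h : t % m < n then a (σ ⟨t % m, h⟩) else 0

/-- cumulative sums of `bb`. -/
def SS (σ : Equiv.Perm (Fin n)) (m : ℕ) (t : ℕ) : ℝ :=
  ∑ u ∈ range t, bb a σ m u

lemma bb_per (σ : Equiv.Perm (Fin n)) (m : ℕ) (t : ℕ) :
    bb a σ m (t + m) = bb a σ m t := by
  unfold bb
  rw [Nat.add_mod_right]

lemma SS_add (σ : Equiv.Perm (Fin n)) (m : ℕ) (i k : ℕ) :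
    SS a σ m (i + k) = SS a σ m i + ∑ x ∈ range k, bb a σ m (i + x) := by
  induction k with
  | zero => simp [SS]
  | succ k ih =>
    rw [← Nat.add_assoc, SS, Finset.sum_range_succ, ← SS, ih, Finset.sum_range_succ]
    rw [add_assoc]

lemma shift_sum (σ : Equiv.Perm (Fin n)) (l : ℕ) (t : ℕ) :
    ∑ x ∈ range (l + 1), bb a σ (l + 1) (t + x) = SS a σ (l + 1) (l + 1) := by
  induction t with
  | zero => simp [SS]
  | succ t ih =>
    rw [Finset.sum_range_succ]
    have e1 : ∀ x : ℕ, t + 1 + x = t + (x + 1) := fun x => by omega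
    have e2 : t + 1 + l = t + (l + 1) := by omega
    rw [e2, bb_per]
    rw [Finset.sum_range_succ'] at ih
    simp only [Nat.add_zero] at ih
    calc (∑ x ∈ range l, bb a σ (l+1) (t + 1 + x)) + bb a σ (l+1) t
        = (∑ x ∈ range l, bb a σ (l+1) (t + (x + 1))) + bb a σ (l+1) t := by
          refine congrArg (· + _) (Finset.sum_congr rfl fun x _ => by rw [e1])
      _ = SS a σ (l+1) (l+1) := ih

lemma SS_per (σ : Equiv.Perm (Fin n)) (l : ℕ) (t : ℕ) :
    SS a σ (l + 1) (t + (l + 1)) = SS a σ (l + 1) t + SS a σ (l + 1) (l + 1) := by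
  rw [SS_add, shift_sum]

lemma claim1 (m : ℕ) (hm1 : m + 1 ≤ n) (σ : Equiv.Perm (Fin n)) (i k : ℕ) (hk : k ≤ m + 1) :
    P a k (σ * (cyc n (m + 1) (Nat.succ_pos m) hm1) ^ i)
      = SS a σ (m + 1) (i + k) - SS a σ (m + 1) i := by
  rw [P_eq_range a k (hk.trans hm1), SS_add, add_sub_cancel_left]
  refine Finset.sum_congr rfl fun x hx => ?_
  have hx1 : x < m + 1 := lt_of_lt_of_le (mem_range.1 hx) hk
  have hxn : x < n := lt_of_lt_of_le hx1 hm1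
  rw [dif_pos hxn]
  unfold bb
  have hmod : (i + x) % (m + 1) < n := lt_of_lt_of_le (Nat.mod_lt _ (Nat.succ_pos m)) hm1
  rw [dif_pos hmod]
  rw [Equiv.Perm.mul_apply]
  have h4 : ((cyc n (m + 1) (Nat.succ_pos m) hm1) ^ i) ⟨x, hxn⟩
      = ⟨(i + x) % (m + 1), hmod⟩ := by
    exact (cyc_pow_apply (Nat.succ_pos m) hm1 i x hx1).trans
      (Fin.ext (by show (x + i) % (m + 1) = (i + x) % (m + 1); rw [Nat.add_comm x i]))
  rw [h4]

lemma mul_theta (x : ℝ) : x * (if 0 ≤ x then (1:ℝ) else 0) = max x 0 := by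
  split_ifs with h
  · rw [mul_one, max_eq_left h]
  · rw [mul_zero, max_eq_right (le_of_not_ge h)]

lemma lemA (hn : 0 < n) (k : ℕ) (hk : 0 < k) (hkn : k ≤ n) :
    (k : ℝ) * ∑ σ : Equiv.Perm (Fin n), a (σ ⟨0, hn⟩) * (if 0 ≤ P a k σ then (1:ℝ) else 0)
      = ∑ σ : Equiv.Perm (Fin n), max (P a k σ) 0 := by
  classical
  set F : Equiv.Perm (Fin n) → ℝ :=
    fun σ => a (σ ⟨0, hn⟩) * (if 0 ≤ P a k σ then (1:ℝ) else 0) with hF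
  have step1 : ∀ i ∈ range k, (∑ σ : Equiv.Perm (Fin n), F σ)
      = ∑ σ : Equiv.Perm (Fin n), F (σ * (cyc n k hk hkn) ^ i) := by
    intro i _
    exact (Fintype.sum_equiv (Equiv.mulRight ((cyc n k hk hkn) ^ i))
      (fun σ => F (σ * (cyc n k hk hkn) ^ i)) F (fun σ => by rw [Equiv.coe_mulRight])).symm
  have step2 : ∀ i ∈ range k, ∀ σ : Equiv.Perm (Fin n),
      F (σ * (cyc n k hk hkn) ^ i)
        = a (σ ⟨i % k, (Nat.mod_lt _ hk).trans_le hkn⟩)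
            * (if 0 ≤ P a k σ then (1:ℝ) else 0) := by
    intro i _ σ
    rw [hF]
    simp only
    rw [P_invariant a k hk hkn σ i k le_rfl]
    congr 2
    rw [Equiv.Perm.mul_apply]
    congr 1
    exact (cyc_pow_apply hk hkn i 0 hk).trans
      (Fin.ext (by show (0 + i) % k = i % k; rw [Nat.zero_add]))
  calc
    (k:ℝ) * ∑ σ : Equiv.Perm (Fin n), F σ
        = ∑ _i ∈ range k, ∑ σ : Equiv.Perm (Fin n), F σ := by
          rw [Finset.sum_const, Finset.card_range, nsmul_eq_mul]
    _ = ∑ i ∈ range k, ∑ σ : Equiv.Perm (Fin n), F (σ * (cyc n k hk hkn) ^ i) :=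
          Finset.sum_congr rfl step1
    _ = ∑ σ : Equiv.Perm (Fin n), ∑ i ∈ range k, F (σ * (cyc n k hk hkn) ^ i) :=
          Finset.sum_comm
    _ = ∑ σ : Equiv.Perm (Fin n), P a k σ * (if 0 ≤ P a k σ then (1:ℝ) else 0) := by
          refine Finset.sum_congr rfl fun σ _ => ?_
          rw [Finset.sum_congr rfl (fun i hi => step2 i hi σ), ← Finset.sum_mul]
          congr 1
          rw [P_eq_range a k hkn σ]
          refine Finset.sum_congr rfl fun i hi => ?_
          have hik : i < k := mem_range.1 hi
          rw [dif_pos (hik.trans_le hkn)]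
          congr 2
          exact Fin.ext (Nat.mod_eq_of_lt hik)
    _ = ∑ σ : Equiv.Perm (Fin n), max (P a k σ) 0 :=
          Finset.sum_congr rfl fun σ _ => mul_theta _

/-- max of `0` and the first `m` partial sums. -/
def Msup (m : ℕ) (σ : Equiv.Perm (Fin n)) : ℝ :=
  (range (m + 1)).sup' nonempty_range_add_one (fun k => P a k σ)

lemma Msup_zero (σ : Equiv.Perm (Fin n)) : Msup a 0 σ = 0 := by
  apply le_antisymm
  · apply Finset.sup'_le
    intro k hk
    have hk0 : k = 0 := by have := mem_range.1 hk; omega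
    rw [hk0, P_zero]
  · have h := Finset.le_sup' (fun k => P a k σ) (mem_range.2 (show 0 < 0 + 1 by omega))
    rw [P_zero a σ] at h
    exact h

lemma lemB (hn : 0 < n) : ∀ m, m ≤ n →
    (∑ σ : Equiv.Perm (Fin n), Msup a m σ)
      = ∑ k ∈ Finset.Icc 1 m, ∑ σ : Equiv.Perm (Fin n),
          a (σ ⟨0, hn⟩) * (if 0 ≤ P a k σ then (1:ℝ) else 0) := by
  intro m
  induction m with
  | zero =>
    intro _
    rw [Finset.Icc_eq_empty (by omega : ¬ (1:ℕ) ≤ 0), Finset.sum_empty]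
    exact Finset.sum_eq_zero fun σ _ => Msup_zero a σ
  | succ m ih =>
    intro hm1
    have hmn : m ≤ n := (Nat.le_succ m).trans hm1
    have key : ∀ σ : Equiv.Perm (Fin n),
        (∑ i ∈ range (m + 1),
          (Msup a (m + 1) (σ * (cyc n (m+1) (Nat.succ_pos m) hm1) ^ i)
            - Msup a m (σ * (cyc n (m+1) (Nat.succ_pos m) hm1) ^ i)))
          = max (P a (m + 1) σ) 0 := by
      intro σ
      have e1 : ∀ i ∈ range (m + 1),
          Msup a (m + 1) (σ * (cyc n (m+1) (Nat.succ_pos m) hm1) ^ i)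
            - Msup a m (σ * (cyc n (m+1) (Nat.succ_pos m) hm1) ^ i)
          = ((range (m + 1 + 1)).sup' nonempty_range_add_one
                (fun k => SS a σ (m + 1) (i + k))
              - (range (m + 1)).sup' (nonempty_range_iff.2 (Nat.succ_pos m).ne')
                (fun k => SS a σ (m + 1) (i + k))) := by
        intro i _
        unfold Msup
        have c1 : ∀ k ∈ range (m + 1 + 1),
            P a k (σ * (cyc n (m+1) (Nat.succ_pos m) hm1) ^ i)
              = SS a σ (m + 1) (i + k) - SS a σ (m + 1) i :=
          fun k hk => claim1 a m hm1 σ i k (by have := mem_range.1 hk; omega)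
        have c2 : ∀ k ∈ range (m + 1),
            P a k (σ * (cyc n (m+1) (Nat.succ_pos m) hm1) ^ i)
              = SS a σ (m + 1) (i + k) - SS a σ (m + 1) i :=
          fun k hk => claim1 a m hm1 σ i k (by have := mem_range.1 hk; omega)
        rw [Finset.sup'_congr nonempty_range_add_one rfl c1,
            Finset.sup'_congr nonempty_range_add_one rfl c2,
            sup'_sub_const, sup'_sub_const]
        ring
      rw [Finset.sum_congr rfl e1]
      have hP : P a (m + 1) σ = SS a σ (m + 1) (m + 1) := by
        have h := claim1 a m hm1 σ 0 (m + 1) le_rfl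
        rw [pow_zero, mul_one] at h
        simpa [SS] using h
      rw [hP]
      exact core (m + 1) (Nat.succ_pos m) (SS a σ (m + 1)) (SS_per a σ m)
    have agg : ((m : ℝ) + 1) *
        ((∑ σ : Equiv.Perm (Fin n), Msup a (m + 1) σ)
          - ∑ σ : Equiv.Perm (Fin n), Msup a m σ)
        = ∑ σ : Equiv.Perm (Fin n), max (P a (m + 1) σ) 0 := by
      rw [← Finset.sum_sub_distrib]
      set G : Equiv.Perm (Fin n) → ℝ := fun σ => Msup a (m + 1) σ - Msup a m σ with hG
      calc ((m : ℝ) + 1) * ∑ σ : Equiv.Perm (Fin n), G σ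
          = ∑ _i ∈ range (m + 1), ∑ σ : Equiv.Perm (Fin n), G σ := by
            rw [Finset.sum_const, Finset.card_range, nsmul_eq_mul]
            push_cast
            ring
        _ = ∑ i ∈ range (m + 1), ∑ σ : Equiv.Perm (Fin n),
              G (σ * (cyc n (m+1) (Nat.succ_pos m) hm1) ^ i) :=
            Finset.sum_congr rfl fun i _ =>
              (Fintype.sum_equiv (Equiv.mulRight ((cyc n (m+1) (Nat.succ_pos m) hm1) ^ i))
                (fun σ => G (σ * (cyc n (m+1) (Nat.succ_pos m) hm1) ^ i)) G
                (fun σ => by rw [Equiv.coe_mulRight])).symm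
        _ = ∑ σ : Equiv.Perm (Fin n), ∑ i ∈ range (m + 1),
              G (σ * (cyc n (m+1) (Nat.succ_pos m) hm1) ^ i) := Finset.sum_comm
        _ = ∑ σ : Equiv.Perm (Fin n), max (P a (m + 1) σ) 0 :=
            Finset.sum_congr rfl fun σ _ => key σ
    have hA := lemA a hn (m + 1) (Nat.succ_pos m) hm1
    have hkey : (∑ σ : Equiv.Perm (Fin n), Msup a (m + 1) σ)
        - (∑ σ : Equiv.Perm (Fin n), Msup a m σ)
        = ∑ σ : Equiv.Perm (Fin n),
            a (σ ⟨0, hn⟩) * (if 0 ≤ P a (m + 1) σ then (1:ℝ) else 0) := by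
      have hne : ((m : ℝ) + 1) ≠ 0 := by positivity
      apply mul_left_cancel₀ hne
      rw [agg, ← hA]
      push_cast
      ring
    rw [Finset.sum_Icc_succ_top (by omega : 1 ≤ m + 1), ← ih hmn]
    linarith [hkey]

end
end DysonAux

open Finset

/-- Dyson's combinatorial identity (Kac): the sum over all permutations of the
maximum of `0` and the partial sums equals the sum over all permutations of the
first term times the number of nonnegative partial sums. -/
theorem dyson_identity (n : ℕ) (hn : 0 < n) (a : Fin n → ℝ) :
    ∑ σ : Equiv.Perm (Fin n),
      (Finset.range (n + 1)).sup' (Finset.nonempty_range_iff.2 (Nat.succ_ne_zero n))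
        (fun k => ∑ j ∈ Finset.univ.filter (fun j : Fin n => (j : ℕ) < k), a (σ j))
    = ∑ σ : Equiv.Perm (Fin n),
        a (σ ⟨0, hn⟩) *
          ∑ k ∈ Finset.Icc 1 n,
            (if 0 ≤ ∑ j ∈ Finset.univ.filter (fun j : Fin n => (j : ℕ) < k), a (σ j)
              then (1 : ℝ) else 0) := by
  classical
  have hB := DysonAux.lemB a hn n le_rfl
  calc
    (∑ σ : Equiv.Perm (Fin n),
      (Finset.range (n + 1)).sup' (Finset.nonempty_range_iff.2 (Nat.succ_ne_zero n))
        (fun k => ∑ j ∈ Finset.univ.filter (fun j : Fin n => (j : ℕ) < k), a (σ j)))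
        = ∑ σ : Equiv.Perm (Fin n), DysonAux.Msup a n σ := rfl
    _ = ∑ k ∈ Finset.Icc 1 n, ∑ σ : Equiv.Perm (Fin n),
          a (σ ⟨0, hn⟩) * (if 0 ≤ DysonAux.P a k σ then (1:ℝ) else 0) := hB
    _ = ∑ σ : Equiv.Perm (Fin n), ∑ k ∈ Finset.Icc 1 n,
          a (σ ⟨0, hn⟩) * (if 0 ≤ DysonAux.P a k σ then (1:ℝ) else 0) := Finset.sum_comm
    _ = ∑ σ : Equiv.Perm (Fin n),
        a (σ ⟨0, hn⟩) *
          ∑ k ∈ Finset.Icc 1 n,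
            (if 0 ≤ ∑ j ∈ Finset.univ.filter (fun j : Fin n => (j : ℕ) < k), a (σ j)
              then (1 : ℝ) else 0) :=
      Finset.sum_congr rfl fun σ _ => (Finset.mul_sum _ _ _).symm
end

section
/- For any real numbers a_1, ..., a_n, the sum over all n! permutations σ of {1,...,n} of max(0, a_{σ1}, a_{σ1}+a_{σ2}, ..., a_{σ1}+...+a_{σn}) equals the sum over all permutations σ of ∑_{ℓ=1}^n (1/ℓ) max(0, a_{σ1}+...+a_{σℓ}). -/
open Finset

namespace WidomAux

variable {n : ℕ}

noncomputable def pf (a : Fin n → ℝ) (σ : Equiv.Perm (Fin n)) (k : ℕ) : ℝ :=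
  ∑ j ∈ Finset.univ.filter (fun j : Fin n => (j : ℕ) < k), a (σ j)

noncomputable def M (a : Fin n → ℝ) (k : ℕ) (σ : Equiv.Perm (Fin n)) : ℝ :=
  (Finset.range (k + 1)).sup' (Finset.nonempty_range_iff.2 (Nat.succ_ne_zero k)) (pf a σ)

lemma pf_zero (a : Fin n → ℝ) (σ : Equiv.Perm (Fin n)) : pf a σ 0 = 0 := by
  simp [pf]

lemma pf_succ (a : Fin n → ℝ) (σ : Equiv.Perm (Fin n)) {ℓ : ℕ} (hℓ : ℓ < n) :
    pf a σ (ℓ + 1) = pf a σ ℓ + a (σ ⟨ℓ, hℓ⟩) := by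
  have h : Finset.univ.filter (fun j : Fin n => (j : ℕ) < ℓ + 1)
      = insert ⟨ℓ, hℓ⟩ (Finset.univ.filter (fun j : Fin n => (j : ℕ) < ℓ)) := by
    ext j; simp [Fin.ext_iff]; omega
  rw [pf, h, Finset.sum_insert (by simp)]
  rw [pf]; ring

lemma pf_mul (a : Fin n → ℝ) (σ τ : Equiv.Perm (Fin n)) (m : ℕ)
    (hτ : ∀ i : Fin n, ((τ i : ℕ) < m ↔ (i : ℕ) < m)) :
    pf a (σ * τ) m = pf a σ m := by
  refine Finset.sum_bijective τ τ.bijective ?_ ?_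
  · intro i; simp [hτ i]
  · intro i _; rfl

lemma M_zero (a : Fin n → ℝ) (σ : Equiv.Perm (Fin n)) : M a 0 σ = 0 := by
  simp [M, pf_zero]

lemma M_nonneg (a : Fin n → ℝ) (k : ℕ) (σ : Equiv.Perm (Fin n)) : 0 ≤ M a k σ := by
  have := Finset.le_sup' (f := pf a σ) (s := Finset.range (k + 1))
    (b := 0) (by simp)
  rw [pf_zero] at this
  exact this

lemma M_succ (a : Fin n → ℝ) (k : ℕ) (σ : Equiv.Perm (Fin n)) :
    M a (k + 1) σ = max (M a k σ) (pf a σ (k + 1)) := by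
  apply le_antisymm
  · refine Finset.sup'_le _ _ ?_
    intro i hi
    rw [Finset.mem_range] at hi
    rcases Nat.lt_succ_iff_lt_or_eq.mp hi with h | h
    · exact le_trans (Finset.le_sup' (pf a σ) (Finset.mem_range.2 h)) (le_max_left _ _)
    · rw [h]; exact le_max_right _ _
  · refine max_le ?_ ?_
    · refine Finset.sup'_le _ _ ?_
      intro i hi
      rw [Finset.mem_range] at hi
      exact Finset.le_sup' (pf a σ) (Finset.mem_range.2 (by omega))
    · exact Finset.le_sup' (pf a σ) (Finset.mem_range.2 (by omega))


lemma pf_rotate {m : ℕ} (a : Fin (m + 1) → ℝ) (σ : Equiv.Perm (Fin (m + 1)))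
    {k : ℕ} (hk : k < m + 1) {ℓ : ℕ} (hℓ : ℓ ≤ k) :
    pf a (σ * Fin.cycleRange ⟨k, hk⟩) ℓ + a (σ ⟨0, Nat.succ_pos m⟩) = pf a σ (ℓ + 1) := by
  induction ℓ with
  | zero =>
      rw [pf_zero, pf_succ a σ (Nat.lt_of_le_of_lt (Nat.zero_le k) hk), pf_zero]
  | succ ℓ ih =>
      have hℓk : ℓ < k := hℓ
      have hℓm : ℓ < m + 1 := lt_trans hℓk hk
      have hℓm1 : ℓ + 1 < m + 1 := lt_of_le_of_lt hℓ hk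
      have hc : (Fin.cycleRange ⟨k, hk⟩) ⟨ℓ, hℓm⟩ = ⟨ℓ + 1, hℓm1⟩ := by
        apply Fin.ext
        rw [Fin.coe_cycleRange_of_lt]
        exact hℓk
      rw [pf_succ a _ hℓm, Equiv.Perm.mul_apply, hc]
      have := ih (le_of_lt hℓk)
      rw [pf_succ a σ hℓm1]
      linarith

lemma key_rotate {m : ℕ} (a : Fin (m + 1) → ℝ) (σ : Equiv.Perm (Fin (m + 1)))
    {k : ℕ} (hk : k < m + 1) (hσ : 0 ≤ pf a σ (k + 1)) :
    M a (k + 1) σ = a (σ ⟨0, Nat.succ_pos m⟩) + M a k (σ * Fin.cycleRange ⟨k, hk⟩) := by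
  have h1 : a (σ ⟨0, Nat.succ_pos m⟩) + M a k (σ * Fin.cycleRange ⟨k, hk⟩)
      = (Finset.range (k + 1)).sup' (Finset.nonempty_range_iff.2 (Nat.succ_ne_zero k))
          (fun ℓ => pf a σ (ℓ + 1)) := by
    rw [M, Finset.comp_sup'_eq_sup'_comp _ (fun x => a (σ ⟨0, Nat.succ_pos m⟩) + x)
      (fun x y => (max_add_add_left _ x y).symm)]
    refine Finset.sup'_congr _ rfl ?_
    intro ℓ hℓ
    rw [Finset.mem_range] at hℓ
    have := pf_rotate a σ hk (Nat.lt_succ_iff.mp hℓ)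
    simp only [Function.comp]
    linarith
  rw [h1]
  apply le_antisymm
  · refine Finset.sup'_le _ _ ?_
    intro i hi
    rw [Finset.mem_range] at hi
    rcases Nat.eq_zero_or_pos i with h | h
    · subst h
      rw [pf_zero]
      exact le_trans hσ (Finset.le_sup' (f := fun ℓ => pf a σ (ℓ + 1))
        (Finset.mem_range.2 (Nat.lt_succ_self k)))
    · obtain ⟨j, rfl⟩ := Nat.exists_eq_succ_of_ne_zero (Nat.pos_iff_ne_zero.mp h)
      exact Finset.le_sup' (f := fun ℓ => pf a σ (ℓ + 1)) (Finset.mem_range.2 (by omega))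
  · refine Finset.sup'_le _ _ ?_
    intro i hi
    rw [Finset.mem_range] at hi
    exact Finset.le_sup' (pf a σ) (Finset.mem_range.2 (by omega))


lemma step {m : ℕ} (a : Fin (m + 1) → ℝ) {k : ℕ} (hk : k < m + 1) :
    ∑ σ : Equiv.Perm (Fin (m + 1)), M a (k + 1) σ
      = ∑ σ : Equiv.Perm (Fin (m + 1)), M a k σ
        + ∑ σ : Equiv.Perm (Fin (m + 1)), (1 / ((k : ℝ) + 1)) * max 0 (pf a σ (k + 1)) := by
  classical
  set c := Fin.cycleRange (⟨k, hk⟩ : Fin (m + 1)) with hc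
  have hcmem : ∀ i : Fin (m + 1), ((c i : ℕ) < k + 1 ↔ (i : ℕ) < k + 1) := by
    intro i
    rcases lt_trichotomy i (⟨k, hk⟩ : Fin (m + 1)) with h | h | h
    · rw [hc, Fin.coe_cycleRange_of_lt h]
      have h' : (i : ℕ) < k := h
      omega
    · rw [hc, h, Fin.cycleRange_self]
      simp only [Fin.val_zero]
      have : (i : ℕ) = k := by rw [h]
      omega
    · rw [hc, Fin.cycleRange_of_gt h]
  have hPinv : ∀ σ : Equiv.Perm (Fin (m + 1)), pf a (σ * c) (k + 1) = pf a σ (k + 1) :=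
    fun σ => pf_mul a σ c (k + 1) hcmem
  set P := Finset.univ.filter (fun σ : Equiv.Perm (Fin (m + 1)) => 0 ≤ pf a σ (k + 1)) with hP
  have hmemP : ∀ σ, σ ∈ P ↔ 0 ≤ pf a σ (k + 1) := by intro σ; simp [hP]
  have h1 : ∑ σ ∈ P, M a (k + 1) σ
      = ∑ σ ∈ P, a (σ ⟨0, Nat.succ_pos m⟩) + ∑ σ ∈ P, M a k σ := by
    have hcg : ∀ σ ∈ P, M a (k + 1) σ = a (σ ⟨0, Nat.succ_pos m⟩) + M a k (σ * c) :=
      fun σ hσ => key_rotate a σ hk ((hmemP σ).1 hσ)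
    rw [Finset.sum_congr rfl hcg, Finset.sum_add_distrib]
    congr 1
    refine Finset.sum_equiv (Equiv.mulRight c) ?_ ?_
    · intro σ
      simp only [Equiv.coe_mulRight, hmemP, hPinv]
    · intro σ _; rfl
  have hswap : ∀ j : Fin (m + 1), (j : ℕ) < k + 1 →
      ∑ σ ∈ P, a (σ j) = ∑ σ ∈ P, a (σ ⟨0, Nat.succ_pos m⟩) := by
    intro j hj
    set z : Fin (m + 1) := ⟨0, Nat.succ_pos m⟩ with hz
    set τ := Equiv.swap z j with hτdef
    have hτ : ∀ i : Fin (m + 1), ((τ i : ℕ) < k + 1 ↔ (i : ℕ) < k + 1) := by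
      intro i
      rcases eq_or_ne i z with h | h
      · subst h
        rw [hτdef, Equiv.swap_apply_left]
        simp only [hz]
        omega
      · rcases eq_or_ne i j with h2 | h2
        · subst h2
          rw [hτdef, Equiv.swap_apply_right]
          simp only [hz]
          omega
        · rw [hτdef, Equiv.swap_apply_of_ne_of_ne h h2]
    refine Finset.sum_equiv (Equiv.mulRight τ) ?_ ?_
    · intro σ
      simp only [Equiv.coe_mulRight, hmemP, pf_mul a σ τ (k + 1) hτ]
    · intro σ _
      simp only [Equiv.coe_mulRight, Equiv.Perm.mul_apply, hτdef, Equiv.swap_apply_left]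
  have hcard : (Finset.univ.filter (fun j : Fin (m + 1) => (j : ℕ) < k + 1)).card = k + 1 := by
    have he : Finset.univ.filter (fun j : Fin (m + 1) => (j : ℕ) < k + 1)
        = Finset.Iic (⟨k, hk⟩ : Fin (m + 1)) := by
      ext j
      simp [Fin.le_def, Nat.lt_succ_iff]
    rw [he, Fin.card_Iic]
  have h2 : ∑ σ ∈ P, pf a σ (k + 1)
      = ((k : ℝ) + 1) * ∑ σ ∈ P, a (σ ⟨0, Nat.succ_pos m⟩) := by
    calc ∑ σ ∈ P, pf a σ (k + 1)
        = ∑ j ∈ Finset.univ.filter (fun j : Fin (m + 1) => (j : ℕ) < k + 1),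
            ∑ σ ∈ P, a (σ j) := Finset.sum_comm
      _ = ∑ j ∈ Finset.univ.filter (fun j : Fin (m + 1) => (j : ℕ) < k + 1),
            ∑ σ ∈ P, a (σ ⟨0, Nat.succ_pos m⟩) := by
            refine Finset.sum_congr rfl ?_
            intro j hj
            exact hswap j (by simpa using hj)
      _ = ((k : ℝ) + 1) * ∑ σ ∈ P, a (σ ⟨0, Nat.succ_pos m⟩) := by
            rw [Finset.sum_const, hcard, nsmul_eq_mul]
            push_cast
            ring
  have h3 : ∑ σ ∈ P, (1 / ((k : ℝ) + 1)) * max 0 (pf a σ (k + 1))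
      = ∑ σ ∈ P, a (σ ⟨0, Nat.succ_pos m⟩) := by
    have : ∀ σ ∈ P, (1 / ((k : ℝ) + 1)) * max 0 (pf a σ (k + 1))
        = (1 / ((k : ℝ) + 1)) * pf a σ (k + 1) := by
      intro σ hσ
      rw [max_eq_right ((hmemP σ).1 hσ)]
    rw [Finset.sum_congr rfl this, ← Finset.mul_sum, h2]
    have hk0 : ((k : ℝ) + 1) ≠ 0 := by positivity
    field_simp
  have hQ1 : ∑ σ ∈ Finset.univ.filter
        (fun σ : Equiv.Perm (Fin (m + 1)) => ¬ (0 ≤ pf a σ (k + 1))), M a (k + 1) σ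
      = ∑ σ ∈ Finset.univ.filter
        (fun σ : Equiv.Perm (Fin (m + 1)) => ¬ (0 ≤ pf a σ (k + 1))), M a k σ := by
    refine Finset.sum_congr rfl ?_
    intro σ hσ
    rw [Finset.mem_filter] at hσ
    rw [M_succ, max_eq_left (le_trans (le_of_lt (lt_of_not_ge hσ.2)) (M_nonneg a k σ))]
  have hQ2 : ∑ σ ∈ Finset.univ.filter
        (fun σ : Equiv.Perm (Fin (m + 1)) => ¬ (0 ≤ pf a σ (k + 1))),
        (1 / ((k : ℝ) + 1)) * max 0 (pf a σ (k + 1)) = 0 := by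
    refine Finset.sum_eq_zero ?_
    intro σ hσ
    rw [Finset.mem_filter] at hσ
    rw [max_eq_left (le_of_lt (lt_of_not_ge hσ.2)), mul_zero]
  have hsplit1 := Finset.sum_filter_add_sum_filter_not Finset.univ
    (fun σ : Equiv.Perm (Fin (m + 1)) => 0 ≤ pf a σ (k + 1)) (M a (k + 1))
  have hsplit2 := Finset.sum_filter_add_sum_filter_not Finset.univ
    (fun σ : Equiv.Perm (Fin (m + 1)) => 0 ≤ pf a σ (k + 1)) (M a k)
  have hsplit3 := Finset.sum_filter_add_sum_filter_not Finset.univ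
    (fun σ : Equiv.Perm (Fin (m + 1)) => 0 ≤ pf a σ (k + 1))
    (fun σ => (1 / ((k : ℝ) + 1)) * max 0 (pf a σ (k + 1)))
  rw [← hsplit1, ← hsplit2, ← hsplit3, ← hP] at *
  linarith [h1, h3, hQ1, hQ2]

lemma main_aux {m : ℕ} (a : Fin (m + 1) → ℝ) :
    ∀ k, k ≤ m + 1 →
      ∑ σ : Equiv.Perm (Fin (m + 1)), M a k σ
        = ∑ σ : Equiv.Perm (Fin (m + 1)),
            ∑ ℓ ∈ Finset.Icc 1 k, (1 / (ℓ : ℝ)) * max 0 (pf a σ ℓ) := by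
  intro k
  induction k with
  | zero => intro _; simp [M_zero]
  | succ k ih =>
      intro hk
      rw [step a (by omega : k < m + 1), ih (by omega)]
      rw [← Finset.sum_add_distrib]
      refine Finset.sum_congr rfl ?_
      intro σ _
      have hins : Finset.Icc 1 (k + 1) = insert (k + 1) (Finset.Icc 1 k) := by
        ext i; simp; omega
      rw [hins, Finset.sum_insert (by simp)]
      push_cast
      ring

end WidomAux

/-- Widom's combinatorial lemma: the sum over all permutations of the maximum of `0`
and the partial sums equals the sum over all permutations of
`∑_{ℓ=1}^n (1/ℓ) max(0, a_{σ1}+...+a_{σℓ})`. -/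
theorem widom_combinatorial_lemma (n : ℕ) (a : Fin n → ℝ) :
    ∑ σ : Equiv.Perm (Fin n),
      (Finset.range (n + 1)).sup' (Finset.nonempty_range_iff.2 (Nat.succ_ne_zero n))
        (fun k => ∑ j ∈ Finset.univ.filter (fun j : Fin n => (j : ℕ) < k), a (σ j))
    = ∑ σ : Equiv.Perm (Fin n),
        ∑ ℓ ∈ Finset.Icc 1 n,
          (1 / (ℓ : ℝ)) *
            max 0 (∑ j ∈ Finset.univ.filter (fun j : Fin n => (j : ℕ) < ℓ), a (σ j)) := by
  cases n with
  | zero =>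
      simp
  | succ m =>
      exact WidomAux.main_aux a (m + 1) (le_refl _)
end

section
/- The two expressions ∑_σ a_{σ1} ∑_{k=1}^n Θ(a_{σ1}+...+a_{σk}) and ∑_σ ∑_{ℓ=1}^n (1/ℓ) max(0, a_{σ1}+...+a_{σℓ}) are equal for any real numbers a_1,...,a_n, where σ ranges over all permutations of {1,...,n}. -/
open Finset

/-- Equality of the right-hand sides of Dyson's identity and Widom's combinatorial lemma. -/
theorem dyson_eq_widom (n : ℕ) (hn : 0 < n) (a : Fin n → ℝ) :
    ∑ σ : Equiv.Perm (Fin n),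
      a (σ ⟨0, hn⟩) *
        ∑ k ∈ Finset.Icc 1 n,
          (if 0 ≤ ∑ j ∈ Finset.univ.filter (fun j : Fin n => (j : ℕ) < k), a (σ j)
            then (1 : ℝ) else 0)
    = ∑ σ : Equiv.Perm (Fin n),
        ∑ ℓ ∈ Finset.Icc 1 n,
          (1 / (ℓ : ℝ)) *
            max 0 (∑ j ∈ Finset.univ.filter (fun j : Fin n => (j : ℕ) < ℓ), a (σ j)) := by
  set z : Fin n := ⟨0, hn⟩ with hz
  have key : ∀ k ∈ Finset.Icc 1 n,
      (∑ σ : Equiv.Perm (Fin n),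
        a (σ z) *
          (if 0 ≤ ∑ j ∈ Finset.univ.filter (fun j : Fin n => (j : ℕ) < k), a (σ j)
            then (1 : ℝ) else 0))
      = ∑ σ : Equiv.Perm (Fin n),
          (1 / (k : ℝ)) *
            max 0 (∑ j ∈ Finset.univ.filter (fun j : Fin n => (j : ℕ) < k), a (σ j)) := by
    intro k hk
    obtain ⟨hk1, hkn⟩ := Finset.mem_Icc.mp hk
    set S : Equiv.Perm (Fin n) → ℝ :=
      fun σ => ∑ j ∈ Finset.univ.filter (fun j : Fin n => (j : ℕ) < k), a (σ j) with hS
    set Θ : Equiv.Perm (Fin n) → ℝ := fun σ => if 0 ≤ S σ then (1 : ℝ) else 0 with hΘ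
    have hzk : (z : ℕ) < k := lt_of_lt_of_le Nat.zero_lt_one hk1
    -- membership invariance under the swap
    have hmem : ∀ (i : Fin n), (i : ℕ) < k → ∀ j : Fin n,
        ((j : ℕ) < k ↔ ((Equiv.swap z i j : Fin n) : ℕ) < k) := by
      intro i hi j
      by_cases h1 : j = z
      · subst h1; rw [Equiv.swap_apply_left]; exact ⟨fun _ => hi, fun _ => hzk⟩
      · by_cases h2 : j = i
        · subst h2; rw [Equiv.swap_apply_right]; exact ⟨fun _ => hzk, fun _ => hi⟩
        · rw [Equiv.swap_apply_of_ne_of_ne h1 h2]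
    have hSinv : ∀ (i : Fin n), (i : ℕ) < k → ∀ σ : Equiv.Perm (Fin n),
        S (σ * Equiv.swap z i) = S σ := by
      intro i hi σ
      simp only [hS]
      refine (Finset.sum_equiv (Equiv.swap z i) ?_ ?_).symm
      · intro j
        simp only [Finset.mem_filter, Finset.mem_univ, true_and]
        exact hmem i hi j
      · intro j _
        simp [Equiv.Perm.mul_apply]
    have hstep : ∀ (i : Fin n), (i : ℕ) < k →
        (∑ σ : Equiv.Perm (Fin n), a (σ z) * Θ σ)
          = ∑ σ : Equiv.Perm (Fin n), a (σ i) * Θ σ := by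
      intro i hi
      calc ∑ σ : Equiv.Perm (Fin n), a (σ z) * Θ σ
          = ∑ σ : Equiv.Perm (Fin n), a ((σ * Equiv.swap z i) z) * Θ (σ * Equiv.swap z i) := by
            refine Fintype.sum_equiv (Equiv.mulRight (Equiv.swap z i)).symm _ _ ?_
            intro σ
            simp [Equiv.Perm.mul_apply]
        _ = ∑ σ : Equiv.Perm (Fin n), a (σ i) * Θ σ := by
            refine Finset.sum_congr rfl fun σ _ => ?_
            have h1 : (σ * Equiv.swap z i) z = σ i := by
              rw [Equiv.Perm.mul_apply, Equiv.swap_apply_left]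
            rw [h1, hΘ]
            simp only [hSinv i hi σ]
    have hcard : (Finset.univ.filter fun j : Fin n => (j : ℕ) < k).card = k := by
      have heq : (Finset.univ.filter fun j : Fin n => (j : ℕ) < k)
          = (Finset.range k).attachFin (fun m hm => lt_of_lt_of_le (Finset.mem_range.mp hm) hkn) := by
        ext j
        simp [Finset.mem_attachFin]
      rw [heq, Finset.card_attachFin, Finset.card_range]
    have hprod : ∀ σ : Equiv.Perm (Fin n), S σ * Θ σ = max 0 (S σ) := by
      intro σ
      rw [hΘ]
      by_cases h : 0 ≤ S σ
      · simp [h, max_eq_right h]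
      · simp [h, max_eq_left (le_of_not_ge h)]
    have hsum : (k : ℝ) * (∑ σ : Equiv.Perm (Fin n), a (σ z) * Θ σ)
        = ∑ σ : Equiv.Perm (Fin n), max 0 (S σ) := by
      calc (k : ℝ) * (∑ σ : Equiv.Perm (Fin n), a (σ z) * Θ σ)
          = ∑ _i ∈ Finset.univ.filter (fun j : Fin n => (j : ℕ) < k),
              ∑ σ : Equiv.Perm (Fin n), a (σ z) * Θ σ := by
            rw [Finset.sum_const, hcard, nsmul_eq_mul]
        _ = ∑ i ∈ Finset.univ.filter (fun j : Fin n => (j : ℕ) < k),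
              ∑ σ : Equiv.Perm (Fin n), a (σ i) * Θ σ := by
            refine Finset.sum_congr rfl fun i hi => ?_
            exact hstep i (by simpa using (Finset.mem_filter.mp hi).2)
        _ = ∑ σ : Equiv.Perm (Fin n),
              ∑ i ∈ Finset.univ.filter (fun j : Fin n => (j : ℕ) < k), a (σ i) * Θ σ :=
            Finset.sum_comm
        _ = ∑ σ : Equiv.Perm (Fin n), S σ * Θ σ := by
            refine Finset.sum_congr rfl fun σ _ => ?_
            rw [← Finset.sum_mul]
        _ = ∑ σ : Equiv.Perm (Fin n), max 0 (S σ) :=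
            Finset.sum_congr rfl fun σ _ => hprod σ
    have hkne : (k : ℝ) ≠ 0 := Nat.cast_ne_zero.mpr (by omega)
    have hfin : (∑ σ : Equiv.Perm (Fin n), (1 / (k : ℝ)) * max 0 (S σ))
        = ∑ σ : Equiv.Perm (Fin n), a (σ z) * Θ σ := by
      rw [← Finset.mul_sum, ← hsum, ← mul_assoc, one_div, inv_mul_cancel₀ hkne, one_mul]
    exact hfin.symm
  calc ∑ σ : Equiv.Perm (Fin n),
        a (σ z) *
          ∑ k ∈ Finset.Icc 1 n,
            (if 0 ≤ ∑ j ∈ Finset.univ.filter (fun j : Fin n => (j : ℕ) < k), a (σ j)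
              then (1 : ℝ) else 0)
      = ∑ σ : Equiv.Perm (Fin n), ∑ k ∈ Finset.Icc 1 n,
          a (σ z) *
            (if 0 ≤ ∑ j ∈ Finset.univ.filter (fun j : Fin n => (j : ℕ) < k), a (σ j)
              then (1 : ℝ) else 0) := by
        simp_rw [Finset.mul_sum]
    _ = ∑ k ∈ Finset.Icc 1 n, ∑ σ : Equiv.Perm (Fin n),
          a (σ z) *
            (if 0 ≤ ∑ j ∈ Finset.univ.filter (fun j : Fin n => (j : ℕ) < k), a (σ j)
              then (1 : ℝ) else 0) := Finset.sum_comm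
    _ = ∑ k ∈ Finset.Icc 1 n, ∑ σ : Equiv.Perm (Fin n),
          (1 / (k : ℝ)) *
            max 0 (∑ j ∈ Finset.univ.filter (fun j : Fin n => (j : ℕ) < k), a (σ j)) :=
        Finset.sum_congr rfl key
    _ = ∑ σ : Equiv.Perm (Fin n), ∑ ℓ ∈ Finset.Icc 1 n,
          (1 / (ℓ : ℝ)) *
            max 0 (∑ j ∈ Finset.univ.filter (fun j : Fin n => (j : ℕ) < ℓ), a (σ j)) :=
        Finset.sum_comm
end

section
/- Define η(t) = -t·ln(t) - (1-t)·ln(1-t) for t ∈ (0,1) and η(0) = η(1) = 0. Then for all t ∈ [0,1], the chain of inequalities 2t(1-t) ≤ η_2(t) ≤ (4 ln 2)·t(1-t) ≤ η(t) holds, where η_2(t) = -ln(t² + (1-t)²). -/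
open Real Set

/-- Taylor lower bound for `-log(1-x)` on `[0,1)`. -/
lemma aux_taylor_log_one_sub (x : ℝ) (hx : 0 ≤ x) (hx1 : x < 1) :
    x + x^2/2 + x^3/3 + x^4/4 + x^5/5 ≤ -Real.log (1 - x) := by
  set f : ℝ → ℝ := fun z => -Real.log (1 - z) - (z + z^2/2 + z^3/3 + z^4/4 + z^5/5) with hf
  have key : ∀ y ∈ Set.Ico (0:ℝ) 1,
      HasDerivAt f (1/(1-y) - (1 + y + y^2 + y^3 + y^4)) y := by
    intro y hy
    have hy1 : (1:ℝ) - y ≠ 0 := by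
      have := hy.2; intro h; nlinarith [hy.2]
    have h1 : HasDerivAt (fun z : ℝ => (1:ℝ) - z) (-1) y := (hasDerivAt_id y).const_sub 1
    have h2 : HasDerivAt (fun z : ℝ => Real.log (1 - z)) ((1-y)⁻¹ * (-1)) y :=
      (Real.hasDerivAt_log hy1).comp y h1
    have h3 : HasDerivAt (fun z : ℝ => z + z^2/2 + z^3/3 + z^4/4 + z^5/5)
        (1 + y + y^2 + y^3 + y^4) y := by
      have := (((((hasDerivAt_id y).add ((hasDerivAt_pow 2 y).div_const 2)).add
        ((hasDerivAt_pow 3 y).div_const 3)).add ((hasDerivAt_pow 4 y).div_const 4)).add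
        ((hasDerivAt_pow 5 y).div_const 5))
      convert this using 1 <;> try rfl
      push_cast; ring
    have := h2.neg.sub h3
    convert this using 1 <;> try rfl
    field_simp
  have hmono : MonotoneOn f (Set.Icc 0 x) := by
    apply monotoneOn_of_deriv_nonneg (convex_Icc 0 x)
    · intro y hy
      have h : y ∈ Set.Ico (0:ℝ) 1 := ⟨hy.1, lt_of_le_of_lt hy.2 hx1⟩
      exact (key y h).continuousAt.continuousWithinAt
    · intro y hy
      rw [interior_Icc] at hy
      have h : y ∈ Set.Ico (0:ℝ) 1 := ⟨hy.1.le, hy.2.trans hx1⟩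
      exact (key y h).differentiableAt.differentiableWithinAt
    · intro y hy
      rw [interior_Icc] at hy
      have h : y ∈ Set.Ico (0:ℝ) 1 := ⟨hy.1.le, hy.2.trans hx1⟩
      rw [(key y h).deriv]
      have hy1 : (0:ℝ) < 1 - y := by linarith [h.2]
      rw [sub_nonneg, le_div_iff₀ hy1]
      nlinarith [pow_nonneg h.1 5]
  have h0 : f 0 ≤ f x := hmono (by constructor <;> norm_num [hx]) (by constructor <;> norm_num [hx]) hx
  simp only [hf] at h0
  norm_num at h0
  linarith

/-- Taylor upper bound for `log(1+x)` on `[0,1]`. -/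
lemma aux_taylor_log_one_add (x : ℝ) (hx : 0 ≤ x) (hx1 : x ≤ 1) :
    Real.log (1 + x) ≤
      x - x^2/2 + x^3/3 - x^4/4 + x^5/5 - x^6/6 + x^7/7 - x^8/8 + x^9/9 := by
  set f : ℝ → ℝ := fun z =>
    (z - z^2/2 + z^3/3 - z^4/4 + z^5/5 - z^6/6 + z^7/7 - z^8/8 + z^9/9) - Real.log (1 + z)
    with hf
  have key : ∀ y : ℝ, 0 ≤ y →
      HasDerivAt f ((1 - y + y^2 - y^3 + y^4 - y^5 + y^6 - y^7 + y^8) - 1/(1+y)) y := by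
    intro y hy
    have hy1 : (1:ℝ) + y ≠ 0 := by positivity
    have h1 : HasDerivAt (fun z : ℝ => (1:ℝ) + z) 1 y := (hasDerivAt_id y).const_add 1
    have h2 : HasDerivAt (fun z : ℝ => Real.log (1 + z)) ((1+y)⁻¹ * 1) y :=
      (Real.hasDerivAt_log hy1).comp y h1
    have h3 : HasDerivAt (fun z : ℝ =>
        z - z^2/2 + z^3/3 - z^4/4 + z^5/5 - z^6/6 + z^7/7 - z^8/8 + z^9/9)
        (1 - y + y^2 - y^3 + y^4 - y^5 + y^6 - y^7 + y^8) y := by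
      have := ((((((((hasDerivAt_id y).sub ((hasDerivAt_pow 2 y).div_const 2)).add
        ((hasDerivAt_pow 3 y).div_const 3)).sub ((hasDerivAt_pow 4 y).div_const 4)).add
        ((hasDerivAt_pow 5 y).div_const 5)).sub ((hasDerivAt_pow 6 y).div_const 6)).add
        ((hasDerivAt_pow 7 y).div_const 7)).sub ((hasDerivAt_pow 8 y).div_const 8)).add
        ((hasDerivAt_pow 9 y).div_const 9)
      convert this using 1 <;> try rfl
      push_cast; ring
    have := h3.sub h2
    convert this using 1 <;> try rfl
    field_simp
  have hmono : MonotoneOn f (Set.Icc 0 x) := by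
    apply monotoneOn_of_deriv_nonneg (convex_Icc 0 x)
    · intro y hy
      exact (key y hy.1).continuousAt.continuousWithinAt
    · intro y hy
      rw [interior_Icc] at hy
      exact (key y hy.1.le).differentiableAt.differentiableWithinAt
    · intro y hy
      rw [interior_Icc] at hy
      rw [(key y hy.1.le).deriv]
      have hy1 : (0:ℝ) < 1 + y := by linarith [hy.1]
      rw [sub_nonneg, div_le_iff₀ hy1]
      nlinarith [pow_nonneg hy.1.le 9]
  have h0 : f 0 ≤ f x := hmono (by constructor <;> norm_num [hx]) (by constructor <;> norm_num [hx]) hx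
  simp only [hf] at h0
  norm_num at h0
  linarith

/-- The key inequality `(2+x)·log(1+x) ≤ (2-x)·(-log(1-x))` on `[0,1)`. -/
lemma aux_D_nonneg (x : ℝ) (hx : 0 ≤ x) (hx1 : x < 1) :
    (2 + x) * Real.log (1 + x) ≤ (2 - x) * (-Real.log (1 - x)) := by
  have h1 := aux_taylor_log_one_sub x hx hx1
  have h2 := aux_taylor_log_one_add x hx hx1.le
  have hx2 : (0:ℝ) ≤ 2 + x := by linarith
  have hx3 : (0:ℝ) ≤ 2 - x := by linarith
  have c1 : (2 + x) * Real.log (1 + x) ≤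
      (2 + x) * (x - x^2/2 + x^3/3 - x^4/4 + x^5/5 - x^6/6 + x^7/7 - x^8/8 + x^9/9) :=
    mul_le_mul_of_nonneg_left h2 hx2
  have c3 : (2 - x) * (x + x^2/2 + x^3/3 + x^4/4 + x^5/5) ≤ (2 - x) * (-Real.log (1 - x)) :=
    mul_le_mul_of_nonneg_left h1 hx3
  have c2 : (2 + x) * (x - x^2/2 + x^3/3 - x^4/4 + x^5/5 - x^6/6 + x^7/7 - x^8/8 + x^9/9) ≤
      (2 - x) * (x + x^2/2 + x^3/3 + x^4/4 + x^5/5) := by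
    have e3 : x^3 ≤ x^2 := pow_le_pow_of_le_one hx hx1.le (by norm_num)
    have e5 : x^5 ≤ x^2 := pow_le_pow_of_le_one hx hx1.le (by norm_num)
    have e6 : x^6 ≤ x^2 := pow_le_pow_of_le_one hx hx1.le (by norm_num)
    have e4 : (0:ℝ) ≤ (1 - x^2) * (241 - 90*x^2) := by
      have a1 : (0:ℝ) ≤ 1 - x^2 := by nlinarith
      have a2 : (0:ℝ) ≤ 241 - 90*x^2 := by nlinarith
      exact mul_nonneg a1 a2
    nlinarith [pow_nonneg hx 4, mul_nonneg (mul_nonneg (pow_nonneg hx 4) (sub_nonneg.2 e3))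
      (pow_nonneg hx 0), mul_nonneg (pow_nonneg hx 4) (sub_nonneg.2 e5),
      mul_nonneg (pow_nonneg hx 4) (sub_nonneg.2 e6),
      mul_nonneg (pow_nonneg hx 4) e4, mul_nonneg (pow_nonneg hx 4) (sub_nonneg.2 e3)]
  linarith

/-- `ψ(x) = (1+x)log(1+x) + (1-x)log(1-x) ≤ 2·log 2·x²` on `[0,1]`. -/
lemma aux_psi_le (x : ℝ) (hx : 0 ≤ x) (hx1 : x ≤ 1) :
    (1 + x) * Real.log (1 + x) + (1 - x) * Real.log (1 - x) ≤ 2 * Real.log 2 * x^2 := by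
  rcases eq_or_lt_of_le hx with h0 | h0
  · simp [← h0]
  set v : ℝ → ℝ := fun y =>
    ((1 + y) * Real.log (1 + y) + (1 - y) * Real.log (1 - y) - 2 * Real.log 2 * y^2) / y^2
    with hv
  -- derivative of v on (0,1)
  have key : ∀ y : ℝ, 0 < y → y < 1 → HasDerivAt v
      ((((Real.log (1+y) - Real.log (1-y)) - 4 * Real.log 2 * y) * y^2 -
        ((1 + y) * Real.log (1 + y) + (1 - y) * Real.log (1 - y) - 2 * Real.log 2 * y^2)
          * (2*y)) / (y^2)^2) y := by
    intro y hy0 hy1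
    have h1p : (0:ℝ) < 1 + y := by linarith
    have h1m : (0:ℝ) < 1 - y := by linarith
    have ha : HasDerivAt (fun z : ℝ => (1 + z) * Real.log (1 + z)) (Real.log (1+y) + 1) y := by
      have := (Real.hasDerivAt_mul_log h1p.ne').comp y ((hasDerivAt_id y).const_add 1)
      convert this using 1 <;> try rfl
      ring
    have hb : HasDerivAt (fun z : ℝ => (1 - z) * Real.log (1 - z))
        (-(Real.log (1-y) + 1)) y := by
      have := (Real.hasDerivAt_mul_log h1m.ne').comp y ((hasDerivAt_id y).const_sub 1)
      convert this using 1 <;> try rfl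
      ring
    have hc : HasDerivAt (fun z : ℝ => 2 * Real.log 2 * z^2) (2 * Real.log 2 * (2*y)) y := by
      have := (hasDerivAt_pow 2 y).const_mul (2 * Real.log 2)
      convert this using 1 <;> try rfl
      push_cast; ring
    have hnum : HasDerivAt (fun z : ℝ =>
        (1 + z) * Real.log (1 + z) + (1 - z) * Real.log (1 - z) - 2 * Real.log 2 * z^2)
        ((Real.log (1+y) - Real.log (1-y)) - 4 * Real.log 2 * y) y := by
      have := (ha.add hb).sub hc
      convert this using 1 <;> try rfl
      ring
    have hden : HasDerivAt (fun z : ℝ => z^2) (2*y) y := by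
      have := hasDerivAt_pow 2 y
      convert this using 1 <;> try rfl
      push_cast; ring
    exact hnum.div hden (by positivity)
  -- v is monotone on [x,1]
  have hmono : MonotoneOn v (Set.Icc x 1) := by
    apply monotoneOn_of_deriv_nonneg (convex_Icc x 1)
    · -- continuity on [x,1] (includes y = 1)
      have hc : ContinuousOn (fun y : ℝ =>
          (1 + y) * Real.log (1 + y) + (1 - y) * Real.log (1 - y) - 2 * Real.log 2 * y^2)
          (Set.Icc x 1) := by
        apply ContinuousOn.sub
        · apply ContinuousOn.add
          · exact (Real.continuous_mul_log.comp (continuous_const.add continuous_id)).continuousOn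
          · exact (Real.continuous_mul_log.comp (continuous_const.sub continuous_id)).continuousOn
        · fun_prop
      apply hc.div (by fun_prop)
      intro y hy
      have : 0 < y := lt_of_lt_of_le h0 hy.1
      positivity
    · intro y hy
      rw [interior_Icc] at hy
      exact (key y (h0.trans_le hy.1.le) hy.2).differentiableAt.differentiableWithinAt
    · intro y hy
      rw [interior_Icc] at hy
      have hy0 : 0 < y := h0.trans_le hy.1.le
      have hy1 : y < 1 := hy.2
      rw [(key y hy0 hy1).deriv]
      apply div_nonneg _ (by positivity)
      have hD := aux_D_nonneg y hy0.le hy1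
      nlinarith [sq_nonneg y]
  have hle : v x ≤ v 1 := hmono ⟨le_refl x, hx1⟩ ⟨hx1, le_refl 1⟩ hx1
  have hv1 : v 1 = 0 := by
    simp only [hv]
    norm_num
  rw [hv1, hv] at hle
  have hx2 : (0:ℝ) < x^2 := by positivity
  rw [div_nonpos_iff] at hle
  rcases hle with ⟨-, h⟩ | ⟨h, -⟩
  · nlinarith
  · linarith

/-- The third inequality: `4 log 2 · t(1-t) ≤ η(t)`. -/
lemma aux_third (t : ℝ) (ht : t ∈ Set.Icc (0 : ℝ) 1) :
    4 * Real.log 2 * (t * (1 - t)) ≤ -(t * Real.log t) - (1 - t) * Real.log (1 - t) := by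
  obtain ⟨ht0, ht1⟩ := ht
  rcases eq_or_lt_of_le ht0 with h0 | h0
  · simp [← h0]
  rcases eq_or_lt_of_le ht1 with h1 | h1
  · simp [h1]
  have hlt : (0:ℝ) < 1 - t := by linarith
  rcases le_or_gt t (1/2) with hc | hc
  · have hx : (0:ℝ) ≤ 1 - 2*t := by linarith
    have hx1 : (1:ℝ) - 2*t ≤ 1 := by linarith
    have h := aux_psi_le (1 - 2*t) hx hx1
    have e1 : (1:ℝ) + (1 - 2*t) = 2 * (1-t) := by ring
    have e2 : (1:ℝ) - (1 - 2*t) = 2 * t := by ring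
    rw [e1, e2, Real.log_mul two_ne_zero hlt.ne', Real.log_mul two_ne_zero h0.ne'] at h
    nlinarith [h]
  · have hx : (0:ℝ) ≤ 2*t - 1 := by linarith
    have hx1 : 2*t - 1 ≤ (1:ℝ) := by linarith
    have h := aux_psi_le (2*t - 1) hx hx1
    have e1 : (1:ℝ) + (2*t - 1) = 2 * t := by ring
    have e2 : (1:ℝ) - (2*t - 1) = 2 * (1-t) := by ring
    rw [e1, e2, Real.log_mul two_ne_zero hlt.ne', Real.log_mul two_ne_zero h0.ne'] at h
    nlinarith [h]

/-- The chain of inequalities `2t(1-t) ≤ η₂(t) ≤ (4 ln 2)·t(1-t) ≤ η(t)` for `t ∈ [0,1]`,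
where `η(t) = -t ln t - (1-t) ln(1-t)` (binary entropy, `η(0)=η(1)=0` since
`Real.log 0 = 0`) and `η₂(t) = -ln(t² + (1-t)²)`. -/
theorem entropy_chain_two (t : ℝ) (ht : t ∈ Set.Icc (0 : ℝ) 1) :
    2 * t * (1 - t) ≤ -Real.log (t ^ 2 + (1 - t) ^ 2) ∧
    -Real.log (t ^ 2 + (1 - t) ^ 2) ≤ 4 * Real.log 2 * (t * (1 - t)) ∧
    4 * Real.log 2 * (t * (1 - t)) ≤ -(t * Real.log t) - (1 - t) * Real.log (1 - t) := by
  obtain ⟨ht0, ht1⟩ := ht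
  set s : ℝ := t ^ 2 + (1 - t) ^ 2 with hs
  have hs_pos : (0:ℝ) < s := by nlinarith [sq_nonneg (2*t - 1)]
  have hs_half : (1:ℝ)/2 ≤ s := by nlinarith [sq_nonneg (2*t - 1)]
  have hs_one : s ≤ 1 := by nlinarith
  refine ⟨?_, ?_, aux_third t ⟨ht0, ht1⟩⟩
  · -- first inequality
    have h := Real.log_le_sub_one_of_pos hs_pos
    have : 1 - s = 2 * t * (1 - t) := by rw [hs]; ring
    linarith
  · -- second inequality, via concavity of log
    have hcon := (strictConcaveOn_log_Ioi.concaveOn).2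
      (show (1/2:ℝ) ∈ Set.Ioi (0:ℝ) by norm_num) (show (1:ℝ) ∈ Set.Ioi (0:ℝ) by norm_num)
      (show (0:ℝ) ≤ 2*(1-s) by linarith) (show (0:ℝ) ≤ 2*s - 1 by linarith)
      (show 2*(1-s) + (2*s - 1) = 1 by ring)
    simp only [smul_eq_mul, mul_one, Real.log_one] at hcon
    have e : 2*(1-s) * (1/2) + (2*s - 1) = s := by ring
    rw [e] at hcon
    have hl : Real.log (1/2) = -Real.log 2 := by
      rw [one_div, Real.log_inv]
    rw [hl] at hcon
    have e2 : 2 * (1 - s) * Real.log 2 = 4 * Real.log 2 * (t * (1 - t)) := by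
      rw [hs]; ring
    linarith [hcon]
end

section
/- Let η_β(t) = (1/(1-β)) ln(t^β + (1-t)^β) and define η̃_β(ξ) = (1/(4π²)) ∫₀¹ (η_β(tξ) - t η_β(ξ)) / (t(1-t)) dt. Then η̃_β(1) = (1+β)/(24β) for every β ∈ (0,∞)\{1}. -/
open Real MeasureTheory Set

namespace WidomRenyiAux


lemma img_rpow {γ : ℝ} (hγ : 0 < γ) :
    (fun x : ℝ => x ^ γ) '' Ioo 0 1 = Ioo (0:ℝ) 1 := by
  ext y
  constructor
  · rintro ⟨x, ⟨hx0, hx1⟩, rfl⟩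
    exact ⟨Real.rpow_pos_of_pos hx0 γ, Real.rpow_lt_one hx0.le hx1 hγ⟩
  · rintro ⟨hy0, hy1⟩
    refine ⟨y ^ γ⁻¹, ⟨Real.rpow_pos_of_pos hy0 _,
      Real.rpow_lt_one hy0.le hy1 (by positivity)⟩, ?_⟩
    exact Real.rpow_inv_rpow hy0.le hγ.ne'

lemma rpow_injOn {γ : ℝ} (hγ : 0 < γ) :
    InjOn (fun x : ℝ => x ^ γ) (Ioo 0 1) := by
  have : StrictMonoOn (fun x : ℝ => x ^ γ) (Ioo 0 1) :=
    fun a ha b hb h => Real.rpow_lt_rpow ha.1.le h hγ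
  exact this.injOn

lemma rpow_hasDeriv {γ : ℝ} :
    ∀ x ∈ Ioo (0:ℝ) 1, HasDerivWithinAt (fun x : ℝ => x ^ γ)
      (γ * x ^ (γ - 1)) (Ioo 0 1) x :=
  fun x hx => (Real.hasDerivAt_rpow_const (Or.inl hx.1.ne')).hasDerivWithinAt

lemma subst_rpow {γ : ℝ} (hγ : 0 < γ) (g : ℝ → ℝ) :
    ∫ x in Ioo (0:ℝ) 1, g x
      = ∫ x in Ioo (0:ℝ) 1, |γ * x ^ (γ - 1)| * g (x ^ γ) := by
  have h := MeasureTheory.integral_image_eq_integral_abs_deriv_smul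
    measurableSet_Ioo rpow_hasDeriv (rpow_injOn hγ) g
  rw [img_rpow hγ] at h
  simpa [smul_eq_mul] using h

lemma subst_rpow_int {γ : ℝ} (hγ : 0 < γ) (g : ℝ → ℝ) :
    IntegrableOn g (Ioo (0:ℝ) 1) ↔
      IntegrableOn (fun x => |γ * x ^ (γ - 1)| * g (x ^ γ)) (Ioo (0:ℝ) 1) := by
  have h := MeasureTheory.integrableOn_image_iff_integrableOn_abs_deriv_smul
    measurableSet_Ioo rpow_hasDeriv (rpow_injOn hγ) g
  rw [img_rpow hγ] at h
  simpa [smul_eq_mul] using h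


lemma intA : IntegrableOn (fun x : ℝ => -Real.log (1 - x) / x) (Ioo 0 1) := by
  have hb : IntegrableOn (fun x : ℝ => 2 + 4 * (1 - x) ^ (-(1/2) : ℝ)) (Ioo 0 1) := by
    have h1 : IntervalIntegrable (fun x : ℝ => x ^ (-(1/2) : ℝ)) volume 0 1 :=
      intervalIntegral.intervalIntegrable_rpow' (by norm_num)
    have h2 := (h1.comp_sub_left 1).symm
    norm_num at h2
    have h3 : IntegrableOn (fun x : ℝ => (1 - x) ^ (-(1/2) : ℝ)) (Ioo 0 1) :=
      (intervalIntegrable_iff_integrableOn_Ioo_of_le zero_le_one).mp h2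
    exact ((integrableOn_const_iff).mpr (Or.inr measure_Ioo_lt_top)).add (h3.const_mul 4)
  refine hb.mono' ?_ ?_
  · exact (((Real.measurable_log.comp (measurable_const.sub measurable_id)).neg.div
      measurable_id).aestronglyMeasurable)
  · rw [ae_restrict_iff' measurableSet_Ioo]
    filter_upwards with x hx
    obtain ⟨hx0, hx1⟩ := hx
    have h1x : (0:ℝ) < 1 - x := by linarith
    have hlognp : Real.log (1 - x) ≤ 0 := Real.log_nonpos (by linarith) (by linarith)
    have hnn : 0 ≤ -Real.log (1 - x) / x := div_nonneg (by linarith) hx0.le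
    rw [Real.norm_of_nonneg hnn]
    have hrnn : (0:ℝ) ≤ (1 - x) ^ (-(1/2) : ℝ) := Real.rpow_nonneg h1x.le _
    rcases le_or_gt x (1/2) with hc | hc
    · have hlog : -Real.log (1 - x) ≤ x / (1 - x) := by
        have := Real.log_le_sub_one_of_pos (x := (1 - x)⁻¹) (by positivity)
        rw [Real.log_inv] at this
        have : -Real.log (1 - x) ≤ (1 - x)⁻¹ - 1 := this
        have he : (1 - x)⁻¹ - 1 = x / (1 - x) := by field_simp; ring
        linarith [he ▸ this]
      have hle2 : -Real.log (1 - x) / x ≤ 2 := by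
        rw [div_le_iff₀ hx0]
        have h2 : x / (1 - x) ≤ 2 * x := by
          rw [div_le_iff₀ h1x]
          nlinarith
        linarith
      nlinarith
    · have hlog : -Real.log (1 - x) ≤ 2 * (1 - x) ^ (-(1/2) : ℝ) := by
        have := Real.log_le_sub_one_of_pos (x := (1 - x) ^ (-(1/2) : ℝ)) (by positivity)
        rw [Real.log_rpow h1x] at this
        nlinarith
      have : -Real.log (1 - x) / x ≤ 2 * (-Real.log (1 - x)) := by
        rw [div_le_iff₀ hx0]
        nlinarith
      nlinarith

lemma hz : HasSum (fun n : ℕ => 1 / ((n:ℝ) + 1) ^ 2) (π ^ 2 / 6) := by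
  have h := hasSum_zeta_two
  have h2 := (hasSum_nat_add_iff' (f := fun n : ℕ => 1 / (n:ℝ) ^ 2) 1).mpr h
  simp only [Finset.range_one, Finset.sum_singleton, Nat.cast_zero] at h2
  norm_num at h2
  convert h2 using 2 with n
  all_goals first | rfl | (push_cast; ring)

lemma valA : ∫ x in Ioo (0:ℝ) 1, -Real.log (1 - x) / x = π ^ 2 / 6 := by
  have key : ∀ x ∈ Ioo (0:ℝ) 1, -Real.log (1 - x) / x = ∑' n : ℕ, x ^ n / ((n:ℝ) + 1) := by
    intro x hx
    have hs := Real.hasSum_pow_div_log_of_abs_lt_one (x := x)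
      (by rw [abs_of_pos hx.1]; exact hx.2)
    have hd := hs.div_const x
    have heq : (fun n : ℕ => x ^ (n+1) / ((n:ℝ) + 1) / x) = fun n : ℕ => x ^ n / ((n:ℝ) + 1) := by
      funext n
      have hn : ((n:ℝ) + 1) ≠ 0 := by positivity
      have hxne : x ≠ 0 := hx.1.ne'
      rw [pow_succ]
      field_simp
    rw [heq] at hd
    exact hd.tsum_eq.symm
  rw [MeasureTheory.setIntegral_congr_fun measurableSet_Ioo key]
  have hint : ∀ n : ℕ, IntegrableOn (fun x : ℝ => x ^ n / ((n:ℝ) + 1)) (Ioo 0 1) := by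
    intro n
    exact ((intervalIntegrable_iff_integrableOn_Ioo_of_le zero_le_one).mp
      (intervalIntegral.intervalIntegrable_pow n)).div_const _
  have hvalp : ∀ n : ℕ, ∫ x in Ioo (0:ℝ) 1, x ^ n / ((n:ℝ) + 1) = 1 / ((n:ℝ) + 1) ^ 2 := by
    intro n
    rw [← MeasureTheory.integral_Ioc_eq_integral_Ioo,
      ← intervalIntegral.integral_of_le zero_le_one, intervalIntegral.integral_div,
      integral_pow, one_pow, zero_pow (Nat.succ_ne_zero n)]
    have hn : ((n:ℝ) + 1) ≠ 0 := by positivity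
    push_cast
    field_simp
    ring
  have hval : ∀ n : ℕ, ∫ x in Ioo (0:ℝ) 1, ‖x ^ n / ((n:ℝ) + 1)‖ = 1 / ((n:ℝ) + 1) ^ 2 := by
    intro n
    rw [← hvalp n]
    refine MeasureTheory.setIntegral_congr_fun measurableSet_Ioo fun x hx => ?_
    exact Real.norm_of_nonneg (div_nonneg (pow_nonneg hx.1.le n) (by positivity))
  have hswap := MeasureTheory.integral_tsum_of_summable_integral_norm
    (F := fun n : ℕ => fun x : ℝ => x ^ n / ((n:ℝ) + 1)) (μ := volume.restrict (Ioo 0 1))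
    hint (hz.summable.congr fun n => (hval n).symm)
  rw [← hswap, tsum_congr hvalp]
  exact hz.tsum_eq


lemma sq_eqOn : ∀ x ∈ Ioo (0:ℝ) 1,
    |(2:ℝ) * x ^ ((2:ℝ) - 1)| * (-Real.log (1 - x ^ (2:ℝ)) / x ^ (2:ℝ))
      = 2 * (-Real.log (1 - x ^ 2) / x) := by
  intro x hx
  have hx0 := hx.1
  have h2 : x ^ ((2:ℝ)) = x ^ (2:ℕ) := by
    rw [show ((2:ℝ)) = ((2:ℕ):ℝ) by norm_num, Real.rpow_natCast]
  have h1 : x ^ ((2:ℝ) - 1) = x := by norm_num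
  rw [h1, h2, abs_of_pos (by positivity)]
  have hxne : x ≠ 0 := hx0.ne'
  field_simp

lemma intB : IntegrableOn (fun x : ℝ => -Real.log (1 - x ^ 2) / x) (Ioo 0 1) := by
  have h := (subst_rpow_int (by norm_num : (0:ℝ) < 2)
    (fun x => -Real.log (1 - x) / x)).mp intA
  have h2 : IntegrableOn (fun x : ℝ => 2 * (-Real.log (1 - x ^ 2) / x)) (Ioo 0 1) :=
    h.congr_fun sq_eqOn measurableSet_Ioo
  have h3 : IntegrableOn (fun x : ℝ => (1/2 : ℝ) * (2 * (-Real.log (1 - x ^ 2) / x)))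
      (Ioo 0 1) := h2.const_mul (1/2 : ℝ)
  refine h3.congr_fun (fun x _ => ?_) measurableSet_Ioo
  show _ = _
  ring

lemma valB : ∫ x in Ioo (0:ℝ) 1, -Real.log (1 - x ^ 2) / x = π ^ 2 / 12 := by
  have h := subst_rpow (by norm_num : (0:ℝ) < 2) (fun x => -Real.log (1 - x) / x)
  rw [valA, MeasureTheory.setIntegral_congr_fun measurableSet_Ioo sq_eqOn,
    MeasureTheory.integral_const_mul] at h
  linarith

lemma log_eqOn : ∀ x ∈ Ioo (0:ℝ) 1,
    -Real.log (1 - x) / x - -Real.log (1 - x ^ 2) / x = Real.log (1 + x) / x := by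
  intro x hx
  have h1 : (0:ℝ) < 1 - x := by linarith [hx.2]
  have h2 : (0:ℝ) < 1 + x := by linarith [hx.1]
  have : (1:ℝ) - x ^ 2 = (1 - x) * (1 + x) := by ring
  rw [this, Real.log_mul h1.ne' h2.ne']
  ring

lemma int0 : IntegrableOn (fun x : ℝ => Real.log (1 + x) / x) (Ioo 0 1) := by
  have h : IntegrableOn (fun x : ℝ => -Real.log (1 - x) / x - -Real.log (1 - x ^ 2) / x)
      (Ioo 0 1) := intA.sub intB
  exact h.congr_fun log_eqOn measurableSet_Ioo

lemma val0 : ∫ x in Ioo (0:ℝ) 1, Real.log (1 + x) / x = π ^ 2 / 12 := by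
  rw [← MeasureTheory.setIntegral_congr_fun measurableSet_Ioo log_eqOn,
    MeasureTheory.integral_sub intA intB, valA, valB]
  ring

variable {β : ℝ}

lemma beta_eqOn (hβ : 0 < β) : ∀ u ∈ Ioo (0:ℝ) 1,
    |β * u ^ (β - 1)| * (Real.log (1 + u ^ β) / u ^ β)
      = β * (Real.log (1 + u ^ β) / u) := by
  intro u hu
  have hu0 := hu.1
  have hub : (0:ℝ) < u ^ β := Real.rpow_pos_of_pos hu0 β
  rw [abs_of_pos (by positivity), Real.rpow_sub hu0, Real.rpow_one]
  field_simp

lemma int1 (hβ : 0 < β) :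
    IntegrableOn (fun u : ℝ => Real.log (1 + u ^ β) / u) (Ioo 0 1) := by
  have h := (subst_rpow_int hβ (fun x => Real.log (1 + x) / x)).mp int0
  have h2 : IntegrableOn (fun u : ℝ => β * (Real.log (1 + u ^ β) / u)) (Ioo 0 1) :=
    h.congr_fun (beta_eqOn hβ) measurableSet_Ioo
  have h3 : IntegrableOn (fun u : ℝ => β⁻¹ * (β * (Real.log (1 + u ^ β) / u)))
      (Ioo 0 1) := h2.const_mul β⁻¹
  refine h3.congr_fun (fun u _ => ?_) measurableSet_Ioo
  show _ = _
  field_simp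

lemma val1 (hβ : 0 < β) :
    ∫ u in Ioo (0:ℝ) 1, Real.log (1 + u ^ β) / u = π ^ 2 / (12 * β) := by
  have h := subst_rpow hβ (fun x => Real.log (1 + x) / x)
  rw [val0, MeasureTheory.setIntegral_congr_fun measurableSet_Ioo (beta_eqOn hβ),
    MeasureTheory.integral_const_mul] at h
  rw [eq_div_iff (by positivity : (12:ℝ) * β ≠ 0)]
  linear_combination (-12 : ℝ) * h

lemma val2 (hβ : 0 < β) :
    ∫ u in Ioo (0:ℝ) 1, (Real.log (1 + u ^ β) - β * Real.log (1 + u)) / u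
      = π ^ 2 * (1 - β ^ 2) / (12 * β) := by
  have key : ∀ u ∈ Ioo (0:ℝ) 1, (Real.log (1 + u ^ β) - β * Real.log (1 + u)) / u
      = Real.log (1 + u ^ β) / u - β * (Real.log (1 + u) / u) := by
    intro u hu
    field_simp
  rw [MeasureTheory.setIntegral_congr_fun measurableSet_Ioo key,
    MeasureTheory.integral_sub (int1 hβ) (int0.const_mul β),
    MeasureTheory.integral_const_mul, val1 hβ, val0]
  field_simp

lemma int2 (hβ : 0 < β) :
    IntegrableOn (fun u : ℝ => (Real.log (1 + u ^ β) - β * Real.log (1 + u)) / u)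
      (Ioo 0 1) := by
  have h : IntegrableOn
      (fun u : ℝ => Real.log (1 + u ^ β) / u - β * (Real.log (1 + u) / u)) (Ioo 0 1) :=
    (int1 hβ).sub (int0.const_mul β)
  refine h.congr_fun (fun u hu => ?_) measurableSet_Ioo
  show _ = _
  field_simp


variable {β : ℝ}

lemma mob_img : (fun u : ℝ => u / (1 + u)) '' Ioo 0 1 = Ioo (0:ℝ) (1/2) := by
  ext t
  constructor
  · rintro ⟨u, ⟨hu0, hu1⟩, rfl⟩
    have h1u : (0:ℝ) < 1 + u := by linarith
    constructor
    · positivity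
    · rw [div_lt_iff₀ h1u]; linarith
  · rintro ⟨ht0, ht1⟩
    have h1t : (0:ℝ) < 1 - t := by linarith
    refine ⟨t / (1 - t), ⟨by positivity, ?_⟩, ?_⟩
    · rw [div_lt_one h1t]; linarith
    · show t / (1 - t) / (1 + t / (1 - t)) = t
      field_simp; ring

lemma mob_inj : InjOn (fun u : ℝ => u / (1 + u)) (Ioo 0 1) := by
  intro a ha b hb h
  have h1a : (0:ℝ) < 1 + a := by linarith [ha.1]
  have h1b : (0:ℝ) < 1 + b := by linarith [hb.1]
  field_simp at h
  linarith

lemma mob_deriv : ∀ u ∈ Ioo (0:ℝ) 1,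
    HasDerivWithinAt (fun u : ℝ => u / (1 + u)) (1 / (1 + u) ^ 2) (Ioo 0 1) u := by
  intro u hu
  have h1u : (1:ℝ) + u ≠ 0 := by nlinarith [hu.1]
  have h := (hasDerivAt_id u).div ((hasDerivAt_const u (1:ℝ)).add (hasDerivAt_id u)) h1u
  simp only [id_eq, Pi.add_apply] at h
  have he : (1 * (1 + u) - u * (0 + 1)) / (1 + u) ^ 2 = 1 / (1 + u) ^ 2 := by ring_nf
  rw [he] at h
  exact h.hasDerivWithinAt

lemma subst_mob (g : ℝ → ℝ) :
    ∫ t in Ioo (0:ℝ) (1/2), g t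
      = ∫ u in Ioo (0:ℝ) 1, |1 / (1 + u) ^ 2| * g (u / (1 + u)) := by
  have h := MeasureTheory.integral_image_eq_integral_abs_deriv_smul
    measurableSet_Ioo mob_deriv mob_inj g
  rw [mob_img] at h
  simpa [smul_eq_mul] using h

lemma subst_mob_int (g : ℝ → ℝ) :
    IntegrableOn g (Ioo (0:ℝ) (1/2)) ↔
      IntegrableOn (fun u => |1 / (1 + u) ^ 2| * g (u / (1 + u))) (Ioo (0:ℝ) 1) := by
  have h := MeasureTheory.integrableOn_image_iff_integrableOn_abs_deriv_smul
    measurableSet_Ioo mob_deriv mob_inj g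
  rw [mob_img] at h
  simpa [smul_eq_mul] using h

lemma mob_eqOn (hβ : 0 < β) : ∀ u ∈ Ioo (0:ℝ) 1,
    |1 / (1 + u) ^ 2| * (Real.log ((u / (1 + u)) ^ β + (1 - u / (1 + u)) ^ β)
        / (u / (1 + u) * (1 - u / (1 + u))))
      = (Real.log (1 + u ^ β) - β * Real.log (1 + u)) / u := by
  intro u hu
  have hu0 := hu.1
  have h1u : (0:ℝ) < 1 + u := by linarith
  have ht : (1:ℝ) - u / (1 + u) = 1 / (1 + u) := by field_simp; ring
  have hub : (0:ℝ) < u ^ β := Real.rpow_pos_of_pos hu0 β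
  have hpb : (0:ℝ) < (1 + u) ^ β := Real.rpow_pos_of_pos h1u β
  rw [ht]
  have h2 : (u / (1 + u)) ^ β = u ^ β / (1 + u) ^ β := Real.div_rpow hu0.le h1u.le β
  have h3 : ((1:ℝ) / (1 + u)) ^ β = 1 / (1 + u) ^ β := by
    rw [Real.div_rpow zero_le_one h1u.le, Real.one_rpow]
  rw [h2, h3, ← add_div]
  rw [Real.log_div (by positivity) hpb.ne']
  rw [Real.log_rpow h1u]
  rw [abs_of_pos (by positivity : (0:ℝ) < 1 / (1 + u) ^ 2)]
  have hden : u / (1 + u) * (1 / (1 + u)) = u / (1 + u) ^ 2 := by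
    rw [div_mul_div_comm, mul_one, ← pow_two]
  rw [hden, div_div_eq_mul_div]
  field_simp
  ring

lemma half_val (hβ : 0 < β) :
    ∫ t in Ioo (0:ℝ) (1/2),
        Real.log (t ^ β + (1 - t) ^ β) / (t * (1 - t))
      = π ^ 2 * (1 - β ^ 2) / (12 * β) := by
  rw [subst_mob (fun t => Real.log (t ^ β + (1 - t) ^ β) / (t * (1 - t))),
    MeasureTheory.setIntegral_congr_fun measurableSet_Ioo (mob_eqOn hβ), val2 hβ]

lemma half_int (hβ : 0 < β) :
    IntegrableOn (fun t : ℝ => Real.log (t ^ β + (1 - t) ^ β) / (t * (1 - t)))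
      (Ioo 0 (1/2)) := by
  rw [subst_mob_int (fun t => Real.log (t ^ β + (1 - t) ^ β) / (t * (1 - t)))]
  exact (int2 hβ).congr_fun (fun u hu => (mob_eqOn hβ u hu).symm) measurableSet_Ioo


lemma full_val {β : ℝ} (hβ : 0 < β) :
    ∫ t in (0:ℝ)..1, Real.log (t ^ β + (1 - t) ^ β) / (t * (1 - t))
      = π ^ 2 * (1 - β ^ 2) / (6 * β) := by
  set g : ℝ → ℝ := fun t => Real.log (t ^ β + (1 - t) ^ β) / (t * (1 - t)) with hg
  have hi1 : IntervalIntegrable g volume 0 (1/2) :=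
    (intervalIntegrable_iff_integrableOn_Ioo_of_le (by norm_num)).mpr (half_int hβ)
  have hsymmfun : (fun x : ℝ => g (1 - x)) = g := by
    funext x
    simp only [hg]
    rw [show (1:ℝ) - (1 - x) = x by ring, add_comm ((1 - x) ^ β) (x ^ β),
      mul_comm (1 - x) x]
  have hi2 : IntervalIntegrable g volume (1/2) 1 := by
    have h := hi1.comp_sub_left 1
    rw [hsymmfun] at h
    norm_num at h
    exact h.symm
  have hval1 : ∫ t in (0:ℝ)..(1/2), g t = π ^ 2 * (1 - β ^ 2) / (12 * β) := by
    rw [intervalIntegral.integral_of_le (by norm_num),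
      MeasureTheory.integral_Ioc_eq_integral_Ioo]
    exact half_val hβ
  have hval2 : ∫ t in ((1:ℝ)/2)..1, g t = π ^ 2 * (1 - β ^ 2) / (12 * β) := by
    have h := intervalIntegral.integral_comp_sub_left (a := 0) (b := 1/2) g 1
    rw [hsymmfun] at h
    norm_num at h
    rw [← h]
    exact hval1
  rw [← intervalIntegral.integral_add_adjacent_intervals hi1 hi2, hval1, hval2]
  ring

end WidomRenyiAux

open WidomRenyiAux in
/-- The Widom transformation of the Rényi entropy function `η_β` evaluated at `ξ = 1`
equals `(1+β)/(24β)`, for every `β ∈ (0,∞)\{1}`. -/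
theorem widom_transform_renyi (β : ℝ) (hβ : 0 < β) (hβ1 : β ≠ 1) :
    (1 / (4 * π ^ 2)) *
      ∫ t in (0 : ℝ)..1,
        ((1 / (1 - β)) * Real.log (t ^ β + (1 - t) ^ β)
          - t * ((1 / (1 - β)) * Real.log ((1 : ℝ) ^ β + (1 - (1 : ℝ)) ^ β)))
          / (t * (1 - t))
    = (1 + β) / (24 * β) := by
  have hβ0 : β ≠ 0 := hβ.ne'
  have hπ : π ≠ 0 := Real.pi_ne_zero
  have h1β : (1:ℝ) - β ≠ 0 := by
    intro h
    exact hβ1 (by linarith)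
  have hsimp : ∀ t : ℝ, ((1 / (1 - β)) * Real.log (t ^ β + (1 - t) ^ β)
      - t * ((1 / (1 - β)) * Real.log ((1:ℝ) ^ β + (1 - (1:ℝ)) ^ β))) / (t * (1 - t))
      = (1 / (1 - β)) * (Real.log (t ^ β + (1 - t) ^ β) / (t * (1 - t))) := by
    intro t
    rw [show (1:ℝ) - 1 = 0 by ring, Real.zero_rpow hβ0, Real.one_rpow, add_zero,
      Real.log_one, mul_zero, mul_zero, sub_zero, mul_div_assoc]
  simp only [hsimp]
  rw [intervalIntegral.integral_const_mul, full_val hβ]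
  field_simp
  ring
end

section
/- Let D be a self-adjoint operator with 0 ≤ D ≤ 1 on a Hilbert space such that D(1-D) is trace class. Then 2 tr(D(1-D)) ≤ tr η_2(D) ≤ (4 ln 2) tr(D(1-D)) ≤ tr η(D), where η_2(t) = -ln(t²+(1-t)²) and η(t) is the binary entropy function. -/
open MeasureTheory ENNReal
open scoped InnerProductSpace

private lemma key1' {t : ℝ} (ht : t ∈ Set.Icc (0:ℝ) 1) :
    2 * (t * (1 - t)) ≤ -Real.log (t ^ 2 + (1 - t) ^ 2) := by
  have hu : (0:ℝ) < t ^ 2 + (1 - t) ^ 2 := by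
    nlinarith [sq_nonneg t, sq_nonneg (1-t), sq_nonneg (2*t-1)]
  have := Real.log_le_sub_one_of_pos hu
  nlinarith

private lemma key2' {t : ℝ} (ht : t ∈ Set.Icc (0:ℝ) 1) :
    -Real.log (t ^ 2 + (1 - t) ^ 2) ≤ 4 * Real.log 2 * (t * (1 - t)) := by
  obtain ⟨h0, h1⟩ := ht
  set s := t * (1 - t) with hs
  have hs0 : 0 ≤ s := mul_nonneg h0 (by linarith)
  have hs4 : 4 * s ≤ 1 := by nlinarith [sq_nonneg (2*t-1)]
  have hconv := convexOn_exp.2 (Set.mem_univ (0:ℝ)) (Set.mem_univ (-Real.log 2))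
    (by linarith : (0:ℝ) ≤ 1 - 4*s) (by linarith : (0:ℝ) ≤ 4*s) (by ring)
  simp only [smul_eq_mul, mul_zero, zero_add, Real.exp_zero] at hconv
  rw [Real.exp_neg, Real.exp_log (by norm_num : (0:ℝ) < 2)] at hconv
  have hexp : Real.exp (4 * s * -Real.log 2) ≤ 1 - 2*s := by nlinarith [hconv]
  have hupos : (0:ℝ) < 1 - 2*s := lt_of_lt_of_le (Real.exp_pos _) hexp
  have hlog : 4 * s * -Real.log 2 ≤ Real.log (1 - 2*s) :=
    (Real.le_log_iff_exp_le hupos).mpr hexp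
  have heq : t ^ 2 + (1 - t) ^ 2 = 1 - 2*s := by rw [hs]; ring
  rw [heq]
  nlinarith [hlog]

private lemma pow_helper' {t q : ℝ} (ht : 0 ≤ t) (hq : 0 ≤ q) (htq : t + q = 1) (n : ℕ) :
    2 ≤ 2 ^ n * (t ^ n + q ^ n) := by
  cases n with
  | zero => norm_num
  | succ m =>
    have h := add_pow_le ht hq (m + 1)
    rw [htq, one_pow] at h
    simp only [Nat.add_sub_cancel] at h
    have h2 : (0:ℝ) < 2 ^ m := by positivity
    calc (2:ℝ) = 2 * 1 := by ring
    _ ≤ 2 * (2 ^ m * (t ^ (m+1) + q ^ (m+1))) := by nlinarith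
    _ = 2 ^ (m+1) * (t ^ (m+1) + q ^ (m+1)) := by ring

private lemma key3' {t : ℝ} (ht : t ∈ Set.Icc (0:ℝ) 1) :
    4 * Real.log 2 * (t * (1 - t)) ≤ -(t * Real.log t) - (1 - t) * Real.log (1 - t) := by
  obtain ⟨h0, h1⟩ := ht
  rcases eq_or_lt_of_le h0 with h0' | h0'
  · simp [← h0']
  rcases eq_or_lt_of_le h1 with h1' | h1'
  · simp [h1']
  set q := 1 - t with hqdef
  have hq0 : 0 < q := by simp [hqdef]; linarith
  have hq1 : q < 1 := by simp [hqdef]; linarith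
  have hA : HasSum (fun n : ℕ => t * (q ^ (n+1) / (n+1))) (-(t * Real.log t)) := by
    have := (Real.hasSum_pow_div_log_of_abs_lt_one (x := q)
      (by rw [abs_of_pos hq0]; exact hq1)).mul_left t
    have h1q : 1 - q = t := by simp [hqdef]
    rw [h1q] at this
    convert this using 1 <;> first | rfl | ring
  have hB : HasSum (fun n : ℕ => q * (t ^ (n+1) / (n+1))) (-(q * Real.log q)) := by
    have := (Real.hasSum_pow_div_log_of_abs_lt_one (x := t)
      (by rw [abs_of_pos h0']; exact h1')).mul_left q
    rw [show (1 - t : ℝ) = q from rfl] at this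
    convert this using 1 <;> first | rfl | ring
  have hC : HasSum (fun n : ℕ => (4 * (t * q)) * ((1/2 : ℝ) ^ (n+1) / (n+1)))
      (4 * Real.log 2 * (t * q)) := by
    have := (Real.hasSum_pow_div_log_of_abs_lt_one (x := (1/2 : ℝ))
      (by rw [abs_of_pos]; norm_num; norm_num)).mul_left (4 * (t * q))
    rw [show (1:ℝ) - 1/2 = 1/2 by norm_num, show -Real.log (1/2) = Real.log 2 by
      rw [one_div, Real.log_inv]; ring] at this
    convert this using 1 <;> first | rfl | ring
  have hsum := hA.add hB
  have hle : ∀ n : ℕ, (4 * (t * q)) * ((1/2 : ℝ) ^ (n+1) / (n+1))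
      ≤ t * (q ^ (n+1) / (n+1)) + q * (t ^ (n+1) / (n+1)) := by
    intro n
    have hk : (0:ℝ) < (n:ℝ) + 1 := by positivity
    have hP : (0:ℝ) < 2 ^ n := by positivity
    have h2P : (0:ℝ) < 2 * 2 ^ n := by positivity
    have htq0 : (0:ℝ) ≤ t * q := by positivity
    have hh := pow_helper' h0 hq0.le (by rw [hqdef]; ring) n
    have hhalf : (1/2:ℝ) ^ (n+1) = 1/(2 * 2 ^ n) := by
      rw [div_pow, one_pow, pow_succ]; ring
    have main : 4 * (t * q) * (1/2 : ℝ) ^ (n+1) ≤ t * q ^ (n+1) + q * t ^ (n+1) := by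
      rw [hhalf, mul_one_div, div_le_iff₀ h2P, pow_succ, pow_succ]
      nlinarith [mul_le_mul_of_nonneg_left hh htq0]
    rw [← mul_div_assoc, ← mul_div_assoc, ← mul_div_assoc, ← add_div]
    gcongr
  have := hasSum_le hle hC hsum
  calc 4 * Real.log 2 * (t * (1 - t)) = 4 * Real.log 2 * (t * q) := by rw [hqdef]
  _ ≤ -(t * Real.log t) + -(q * Real.log q) := this
  _ = -(t * Real.log t) - (1 - t) * Real.log (1 - t) := by rw [hqdef]; ring

/-- If `D` is self-adjoint with `0 ≤ D ≤ 1` and `D(1-D)` is trace class, then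
`2 tr D(1-D) ≤ tr η₂(D) ≤ (4 ln 2) tr D(1-D) ≤ tr η(D)`, where
`η₂(t) = -ln(t²+(1-t)²)` and `η` is the binary entropy function; the trace is
the (extended-real) sum of diagonal matrix elements in a Hilbert basis. -/
theorem variance_entropy_trace_bounds {H : Type*} [NormedAddCommGroup H]
    [InnerProductSpace ℂ H] [CompleteSpace H] {ι : Type*}
    (D : H →L[ℂ] H) (hsa : IsSelfAdjoint D) (h0 : 0 ≤ D) (h1 : D ≤ 1)
    (e : HilbertBasis ι ℂ H)
    (htr : ∑' i, ENNReal.ofReal (⟪(D * (1 - D)) (e i), e i⟫_ℂ).re < ⊤) :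
    2 * (∑' i, ENNReal.ofReal (⟪(D * (1 - D)) (e i), e i⟫_ℂ).re)
      ≤ (∑' i, ENNReal.ofReal
          (⟪(cfc (fun t : ℝ => -Real.log (t ^ 2 + (1 - t) ^ 2)) D) (e i), e i⟫_ℂ).re) ∧
    (∑' i, ENNReal.ofReal
        (⟪(cfc (fun t : ℝ => -Real.log (t ^ 2 + (1 - t) ^ 2)) D) (e i), e i⟫_ℂ).re)
      ≤ ENNReal.ofReal (4 * Real.log 2) *
          ∑' i, ENNReal.ofReal (⟪(D * (1 - D)) (e i), e i⟫_ℂ).re ∧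
    ENNReal.ofReal (4 * Real.log 2) *
        (∑' i, ENNReal.ofReal (⟪(D * (1 - D)) (e i), e i⟫_ℂ).re)
      ≤ ∑' i, ENNReal.ofReal
          (⟪(cfc (fun t : ℝ => -(t * Real.log t) - (1 - t) * Real.log (1 - t)) D)
            (e i), e i⟫_ℂ).re := by
  -- continuity facts
  have hcont2 : Continuous fun t : ℝ => -Real.log (t ^ 2 + (1 - t) ^ 2) := by
    refine Continuous.neg ?_
    rw [continuous_iff_continuousAt]
    intro x
    refine ContinuousAt.log (by fun_prop) ?_
    nlinarith [sq_nonneg x, sq_nonneg (1-x), sq_nonneg (2*x-1)]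
  have hcontη : Continuous fun t : ℝ => -(t * Real.log t) - (1 - t) * Real.log (1 - t) := by
    have h1 : Continuous fun t : ℝ => t * Real.log t := Real.continuous_mul_log
    have h2 : Continuous fun t : ℝ => (1 - t) * Real.log (1 - t) :=
      Real.continuous_mul_log.comp (by fun_prop)
    exact (h1.neg).sub h2
  -- spectrum is contained in [0,1]
  have hspec : ∀ x ∈ spectrum ℝ D, x ∈ Set.Icc (0:ℝ) 1 := by
    intro x hx
    exact ⟨spectrum_nonneg_of_nonneg h0 hx, (CFC.le_one_iff (R := ℝ) D).mp h1 x hx⟩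
  -- D(1-D) as cfc
  have hone : cfc (fun _ : ℝ => (1:ℝ)) D = 1 := cfc_one ℝ D
  have hq : cfc (fun t : ℝ => t * (1 - t)) D = D * (1 - D) := by
    rw [cfc_mul _ _ D (by fun_prop) (by fun_prop), cfc_sub _ _ D (by fun_prop) (by fun_prop),
      hone, cfc_id' ℝ D]
  have hA2 : (2:ℝ) • (D * (1-D)) = cfc (fun t : ℝ => 2 * (t * (1 - t))) D := by
    rw [← hq, ← cfc_smul (2:ℝ) _ D]
    simp [smul_eq_mul]
  have hA4 : (4 * Real.log 2) • (D * (1-D))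
      = cfc (fun t : ℝ => 4 * Real.log 2 * (t * (1 - t))) D := by
    rw [← hq, ← cfc_smul (4 * Real.log 2) _ D]
    simp [smul_eq_mul]
  -- operator inequalities
  have I1 : (2:ℝ) • (D * (1-D)) ≤ cfc (fun t : ℝ => -Real.log (t ^ 2 + (1 - t) ^ 2)) D := by
    rw [hA2]
    exact cfc_mono (fun x hx => key1' (hspec x hx)) (by fun_prop) hcont2.continuousOn
  have I2 : cfc (fun t : ℝ => -Real.log (t ^ 2 + (1 - t) ^ 2)) D
      ≤ (4 * Real.log 2) • (D * (1-D)) := by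
    rw [hA4]
    exact cfc_mono (fun x hx => key2' (hspec x hx)) hcont2.continuousOn (by fun_prop)
  have I3 : (4 * Real.log 2) • (D * (1-D))
      ≤ cfc (fun t : ℝ => -(t * Real.log t) - (1 - t) * Real.log (1 - t)) D := by
    rw [hA4]
    exact cfc_mono (fun x hx => key3' (hspec x hx)) (by fun_prop) hcontη.continuousOn
  -- quadratic forms of operator inequalities
  have hle : ∀ (A B : H →L[ℂ] H), A ≤ B → ∀ x, (⟪A x, x⟫_ℂ).re ≤ (⟪B x, x⟫_ℂ).re := by
    intro A B hAB x
    have := ((ContinuousLinearMap.nonneg_iff_isPositive (B - A)).mp (sub_nonneg.mpr hAB)).2 x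
    rw [ContinuousLinearMap.reApplyInnerSelf] at this
    simp only [ContinuousLinearMap.sub_apply, inner_sub_left, map_sub,
      RCLike.re_to_complex] at this
    linarith
  have hsmul : ∀ (c : ℝ) (A : H →L[ℂ] H) (x : H),
      (⟪(c • A) x, x⟫_ℂ).re = c * (⟪A x, x⟫_ℂ).re := by
    intro c A x
    have : (c • A) x = (c : ℂ) • A x := by simp [Complex.coe_smul]
    rw [this, inner_smul_left, Complex.mul_re]
    simp
  have hlog2 : (0:ℝ) ≤ 4 * Real.log 2 := by positivity
  refine ⟨?_, ?_, ?_⟩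
  · rw [← ENNReal.tsum_mul_left]
    refine ENNReal.tsum_le_tsum fun i => ?_
    have hcast : ∀ x y : ℝ, 2 * x ≤ y →
        (2:ℝ≥0∞) * ENNReal.ofReal x ≤ ENNReal.ofReal y := by
      intro x y h
      rw [show (2:ℝ≥0∞) = ENNReal.ofReal 2 by norm_num,
        ← ENNReal.ofReal_mul (by norm_num : (0:ℝ) ≤ 2)]
      exact ENNReal.ofReal_le_ofReal h
    refine hcast _ _ ?_
    rw [← hsmul 2 (D * (1 - D)) (e i)]
    exact hle _ _ I1 (e i)
  · rw [← ENNReal.tsum_mul_left]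
    refine ENNReal.tsum_le_tsum fun i => ?_
    rw [← ENNReal.ofReal_mul hlog2]
    refine ENNReal.ofReal_le_ofReal ?_
    rw [← hsmul (4 * Real.log 2) (D * (1 - D)) (e i)]
    exact hle _ _ I2 (e i)
  · rw [← ENNReal.tsum_mul_left]
    refine ENNReal.tsum_le_tsum fun i => ?_
    rw [← ENNReal.ofReal_mul hlog2]
    refine ENNReal.ofReal_le_ofReal ?_
    rw [← hsmul (4 * Real.log 2) (D * (1 - D)) (e i)]
    exact hle _ _ I3 (e i)
end
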